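/- arXiv:2511.01420 — 7 statements merged into one kernel-verified Lean document; each statement's English description precedes it below -/
import Mathlib

section
/- If the slow condition holds at node v at time t on some level s ∈ ℕ (i.e., some neighbor w of v satisfies L_v(t)−L_w(t)−O_{v,w} ≥ 4s·δ_{v,w} and every neighbor w of v satisfies L_v(t)−L_w(t)−O_{v,w} ≥ −4s·δ_{v,w}), then the slow trigger holds at v at time t on the same level s (i.e., some neighbor w satisfies o_{v,w}(t) > (4s−1)·δ_{v,w} and every neighbor w satisfies o_{v,w}(t) > −(4s+1)·δ_{v,w}). Likewise, if the fast condition holds at v at time t on some level s ∈ ℕ (some neighbor w satisfies L_v(t)−L_w(t)−O_{v,w} ≤ −(4s+2)·δ_{v,w} and every neighbor w satisfies L_v(t)−L_w(t)−O_{v,w} ≤ (4s+2)·δ_{v,w}), then the fast trigger holds at v at time t on the same level s (some neighbor w satisfies o_{v,w}(t) < −(4s+1)·δ_{v,w} and every neighbor w satisfies o_{v,w}(t) < (4s+3)·δ_{v,w}). -/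
open SimpleGraph

namespace GCS

variable {V : Type*}

def edgeWt (δ O : V → V → ℝ) (s : ℝ) (v w : V) : ℝ :=
  4 * s * δ v w - O v w

def walkWt {G : SimpleGraph V} (δ O : V → V → ℝ) (s : ℝ) {v w : V}
    (p : G.Walk v w) : ℝ :=
  (p.darts.map fun d => edgeWt δ O s d.toProd.1 d.toProd.2).sum

def NonnegCycles (G : SimpleGraph V) (δ O : V → V → ℝ) (s : ℝ) : Prop :=
  ∀ (v : V) (c : G.Walk v v), c.IsCycle → 0 ≤ walkWt δ O s c

noncomputable def dS (G : SimpleGraph V) (δ O : V → V → ℝ) (s : ℝ) (v w : V) : ℝ :=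
  sInf {x : ℝ | ∃ p : G.Walk v w, walkWt δ O s p = x}

noncomputable def Psi (G : SimpleGraph V) (δ O : V → V → ℝ) (s : ℝ)
    (L : V → ℝ → ℝ) (v : V) (t : ℝ) : ℝ :=
  sSup {x : ℝ | ∃ w : V, ∃ p : G.Walk v w, x = L w t - L v t - walkWt δ O s p}

noncomputable def PsiAll (G : SimpleGraph V) (δ O : V → V → ℝ) (s : ℝ)
    (L : V → ℝ → ℝ) (t : ℝ) : ℝ :=
  ⨆ v : V, Psi G δ O s L v t

noncomputable def PsiE (G : SimpleGraph V) (δ O : V → V → ℝ) (s : ℝ)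
    (L : V → ℝ → ℝ) (v : V) (t : ℝ) : EReal :=
  ⨆ w : V, ⨆ p : G.Walk v w, ((L w t - L v t - walkWt δ O s p : ℝ) : EReal)

def SlowCondAt (G : SimpleGraph V) (δ O : V → V → ℝ) (L : V → ℝ → ℝ)
    (v : V) (t : ℝ) (s : ℕ) : Prop :=
  (∃ w, G.Adj v w ∧ 4 * (s : ℝ) * δ v w ≤ L v t - L w t - O v w) ∧
  (∀ w, G.Adj v w → -(4 * (s : ℝ) * δ v w) ≤ L v t - L w t - O v w)

def FastCondAt (G : SimpleGraph V) (δ O : V → V → ℝ) (L : V → ℝ → ℝ)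
    (v : V) (t : ℝ) (s : ℕ) : Prop :=
  (∃ w, G.Adj v w ∧ L v t - L w t - O v w ≤ -((4 * (s : ℝ) + 2) * δ v w)) ∧
  (∀ w, G.Adj v w → L v t - L w t - O v w ≤ (4 * (s : ℝ) + 2) * δ v w)

def Admissible (G : SimpleGraph V) (δ O : V → V → ℝ) (L : V → ℝ → ℝ)
    (ϑ μ : ℝ) : Prop :=
  ∀ (v : V) (t : ℝ),
    ((∃ s : ℕ, SlowCondAt G δ O L v t s) → deriv (L v) t ≤ ϑ) ∧
    ((∃ s : ℕ, FastCondAt G δ O L v t s) → 1 + μ ≤ deriv (L v) t)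

def AdmissibleOn (G : SimpleGraph V) (δ O : V → V → ℝ) (L : V → ℝ → ℝ)
    (ϑ μ : ℝ) (a b : ℝ) : Prop :=
  ∀ (v : V), ∀ t ∈ Set.Icc a b,
    ((∃ s : ℕ, SlowCondAt G δ O L v t s) → deriv (L v) t ≤ ϑ) ∧
    ((∃ s : ℕ, FastCondAt G δ O L v t s) → 1 + μ ≤ deriv (L v) t)

end GCS

/-- the slow (fast) condition on level `s` implies the slow (fast)
trigger on the same level `s`. -/
theorem slow_fast_condition_implies_trigger
    {V : Type*} [Fintype V] [DecidableEq V] [Nonempty V]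
    (G : SimpleGraph V) (hconn : G.Connected)
    (δ O : V → V → ℝ)
    (hδpos : ∀ v w, G.Adj v w → 0 < δ v w)
    (hδsym : ∀ v w, G.Adj v w → δ v w = δ w v)
    (hOanti : ∀ v w, G.Adj v w → O v w = -O w v)
    (L : V → ℝ → ℝ) (o : V → V → ℝ → ℝ) (t : ℝ)
    (herr : ∀ v w, G.Adj v w → |(L v t - L w t - o v w t) - O v w| < δ v w)
    (v : V) (s : ℕ) :
    ((((∃ w, G.Adj v w ∧ 4 * (s : ℝ) * δ v w ≤ L v t - L w t - O v w) ∧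
       (∀ w, G.Adj v w → -(4 * (s : ℝ) * δ v w) ≤ L v t - L w t - O v w)) →
      ((∃ w, G.Adj v w ∧ (4 * (s : ℝ) - 1) * δ v w < o v w t) ∧
       (∀ w, G.Adj v w → -((4 * (s : ℝ) + 1) * δ v w) < o v w t)))
     ∧
     (((∃ w, G.Adj v w ∧ L v t - L w t - O v w ≤ -((4 * (s : ℝ) + 2) * δ v w)) ∧
       (∀ w, G.Adj v w → L v t - L w t - O v w ≤ (4 * (s : ℝ) + 2) * δ v w)) →
      ((∃ w, G.Adj v w ∧ o v w t < -((4 * (s : ℝ) + 1) * δ v w)) ∧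
       (∀ w, G.Adj v w → o v w t < (4 * (s : ℝ) + 3) * δ v w)))) := by
  constructor
  · rintro ⟨⟨w, hadj, hw⟩, hall⟩
    constructor
    · refine ⟨w, hadj, ?_⟩
      have := abs_lt.mp (herr v w hadj)
      nlinarith [hδpos v w hadj]
    · intro u hadj
      have := abs_lt.mp (herr v u hadj)
      have := hall u hadj
      nlinarith [hδpos v u hadj]
  · rintro ⟨⟨w, hadj, hw⟩, hall⟩
    constructor
    · refine ⟨w, hadj, ?_⟩
      have := abs_lt.mp (herr v w hadj)
      nlinarith [hδpos v w hadj]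
    · intro u hadj
      have := abs_lt.mp (herr v u hadj)
      have := hall u hadj
      nlinarith [hδpos v u hadj]
end

section
/- At any node v and time t, the slow trigger and the fast trigger are mutually exclusive: there do not exist levels s, s' ∈ ℕ such that the slow trigger holds at v at time t on level s and the fast trigger holds at v at time t on level s'. -/
open SimpleGraph

/-- the slow trigger and the fast trigger are mutually exclusive. -/
theorem slow_fast_trigger_mutually_exclusive
    {V : Type*} [Fintype V] [DecidableEq V] [Nonempty V]
    (G : SimpleGraph V)
    (δ : V → V → ℝ)
    (hδpos : ∀ v w, G.Adj v w → 0 < δ v w)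
    (hδsym : ∀ v w, G.Adj v w → δ v w = δ w v)
    (o : V → V → ℝ → ℝ) (v : V) (t : ℝ) :
    ¬ ∃ s s' : ℕ,
      (((∃ w, G.Adj v w ∧ (4 * (s : ℝ) - 1) * δ v w < o v w t) ∧
        (∀ w, G.Adj v w → -((4 * (s : ℝ) + 1) * δ v w) < o v w t)) ∧
       ((∃ w, G.Adj v w ∧ o v w t < -((4 * (s' : ℝ) + 1) * δ v w)) ∧
        (∀ w, G.Adj v w → o v w t < (4 * (s' : ℝ) + 3) * δ v w))) := by
  rintro ⟨s, s', ⟨⟨w1, hw1, h1⟩, hall1⟩, ⟨w2, hw2, h2⟩, hall2⟩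
  have d1 := hδpos v w1 hw1
  have d2 := hδpos v w2 hw2
  -- from w2: -(4s+1)δ < o < -(4s'+1)δ ⇒ s' < s
  have hlt : (s' : ℝ) < s := by nlinarith [hall1 w2 hw2, h2]
  -- from w1: (4s-1)δ < o < (4s'+3)δ ⇒ s < s'+1
  have hlt2 : (s : ℝ) < s' + 1 := by nlinarith [hall2 w1 hw1, h1]
  have : (s' : ℕ) < s := by exact_mod_cast hlt
  have : (s : ℕ) < s' + 1 := by exact_mod_cast hlt2
  omega
end

section
/- Assume the execution is admissible. Let s ∈ ℕ be such that every directed cycle has nonnegative ω^s-weight, let v ∈ V, and let t < t' be times such that Ψ_v^s(τ) > 0 for all τ ∈ (t,t'). Then Ψ_v^s(t') ≤ Ψ_v^s(t) + ϑ·(t'−t) − (L_v(t') − L_v(t)). -/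
open SimpleGraph

namespace GCS

section Aux

variable {V : Type*} {G : SimpleGraph V} {δ O : V → V → ℝ} {s : ℝ}

lemma walkWt_nil {v : V} : walkWt δ O s (SimpleGraph.Walk.nil : G.Walk v v) = 0 := rfl

lemma walkWt_cons {u v w : V} (h : G.Adj u v) (p : G.Walk v w) :
    walkWt δ O s (SimpleGraph.Walk.cons h p) = edgeWt δ O s u v + walkWt δ O s p := by
  simp [walkWt]

lemma walkWt_append {u v w : V} (p : G.Walk u v) (q : G.Walk v w) :
    walkWt δ O s (p.append q) = walkWt δ O s p + walkWt δ O s q := by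
  simp [walkWt, SimpleGraph.Walk.darts_append]

lemma walkWt_concat {u v w : V} (p : G.Walk u v) (h : G.Adj v w) :
    walkWt δ O s (p.concat h) = walkWt δ O s p + edgeWt δ O s v w := by
  rw [SimpleGraph.Walk.concat_eq_append, walkWt_append, walkWt_cons, walkWt_nil]
  ring

lemma edgeWt_pair {u v : V} (h : G.Adj u v)
    (hδpos : ∀ v w, G.Adj v w → 0 < δ v w)
    (hδsym : ∀ v w, G.Adj v w → δ v w = δ w v)
    (hOanti : ∀ v w, G.Adj v w → O v w = -O w v)
    (hs : 0 ≤ s) :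
    0 ≤ edgeWt δ O s u v + edgeWt δ O s v u := by
  have h1 := hδpos u v h
  have h2 := hδsym u v h
  have h3 := hOanti u v h
  have : (0:ℝ) ≤ 4 * s * δ u v := by positivity
  simp only [edgeWt]
  nlinarith [h1, h2, h3]

lemma closed_nonneg
    (hδpos : ∀ v w, G.Adj v w → 0 < δ v w)
    (hδsym : ∀ v w, G.Adj v w → δ v w = δ w v)
    (hOanti : ∀ v w, G.Adj v w → O v w = -O w v)
    (hs : 0 ≤ s) (hnc : NonnegCycles G δ O s)
    {a b : V} (h : G.Adj a b) (q : G.Walk b a) (hq : q.IsPath) :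
    0 ≤ edgeWt δ O s a b + walkWt δ O s q := by
  by_cases he : s(a, b) ∈ q.edges
  · cases q with
    | nil => simp at he
    | @cons _ c _ h' r =>
      rw [SimpleGraph.Walk.cons_isPath_iff] at hq
      rw [SimpleGraph.Walk.edges_cons, List.mem_cons] at he
      rcases he with he | he
      · rw [Sym2.eq_iff] at he
        rcases he with ⟨rfl, rfl⟩ | ⟨rfl, -⟩
        · exact absurd rfl h.ne
        · -- r : G.Walk a a with r.IsPath, so r = nil
          have hr : r = SimpleGraph.Walk.nil :=
            congrArg Subtype.val (SimpleGraph.Path.loop_eq ⟨r, hq.1⟩)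
          subst hr
          rw [walkWt_cons, walkWt_nil]
          have := edgeWt_pair h hδpos hδsym hOanti hs
          linarith
      · exact absurd (SimpleGraph.Walk.fst_mem_support_of_mem_edges r
          (by rwa [Sym2.eq_swap] at he)) hq.2
  · have hcyc : (SimpleGraph.Walk.cons h q).IsCycle :=
      (SimpleGraph.Walk.cons_isCycle_iff q h).2 ⟨hq, he⟩
    have := hnc a (SimpleGraph.Walk.cons h q) hcyc
    rwa [walkWt_cons] at this

lemma walkWt_bypass_le [DecidableEq V]
    (hδpos : ∀ v w, G.Adj v w → 0 < δ v w)
    (hδsym : ∀ v w, G.Adj v w → δ v w = δ w v)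
    (hOanti : ∀ v w, G.Adj v w → O v w = -O w v)
    (hs : 0 ≤ s) (hnc : NonnegCycles G δ O s)
    {u w : V} (p : G.Walk u w) :
    walkWt δ O s p.bypass ≤ walkWt δ O s p := by
  induction p with
  | nil => exact le_rfl
  | @cons a b c h p ih =>
    rw [SimpleGraph.Walk.bypass]
    split_ifs with hs'
    · have hsp := SimpleGraph.Walk.take_spec p.bypass hs'
      have hwt : walkWt δ O s (p.bypass.takeUntil a hs') +
          walkWt δ O s (p.bypass.dropUntil a hs') = walkWt δ O s p.bypass := by
        rw [← walkWt_append, hsp]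
      have h0 : 0 ≤ edgeWt δ O s a b + walkWt δ O s (p.bypass.takeUntil a hs') :=
        closed_nonneg hδpos hδsym hOanti hs hnc h _
          ((p.bypass_isPath).takeUntil hs')
      rw [walkWt_cons]
      linarith
    · rw [walkWt_cons, walkWt_cons]
      linarith

lemma continuous_finset_sup' {ι : Type*} {f : ι → ℝ → ℝ} (hf : ∀ i, Continuous (f i)) :
    ∀ (t : Finset ι) (ht : t.Nonempty), Continuous fun x => t.sup' ht fun i => f i x := by
  intro t
  induction t using Finset.cons_induction with
  | empty => exact fun ht => absurd ht (by simp)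
  | cons a s ha ih =>
    intro ht
    rcases s.eq_empty_or_nonempty with rfl | hs
    · simpa using hf a
    · have h2 : Continuous fun x => f a x ⊔ s.sup' hs fun i => f i x := (hf a).max (ih hs)
      have h3 : ∀ x, (Finset.cons a s ha).sup' ht (fun i => f i x)
          = f a x ⊔ s.sup' hs fun i => f i x := fun x => Finset.sup'_cons hs _
      simpa only [h3] using h2

end Aux

end GCS

/-- if `Ψ_v^s` stays positive throughout `(t,t')`, then
`Ψ_v^s(t') ≤ Ψ_v^s(t) + ϑ(t'-t) - (L_v(t') - L_v(t))`. -/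
theorem waitup
    {V : Type*} [Fintype V] [DecidableEq V] [Nonempty V]
    (G : SimpleGraph V) (hconn : G.Connected)
    (δ O : V → V → ℝ)
    (hδpos : ∀ v w, G.Adj v w → 0 < δ v w)
    (hδsym : ∀ v w, G.Adj v w → δ v w = δ w v)
    (hOanti : ∀ v w, G.Adj v w → O v w = -O w v)
    (L : V → ℝ → ℝ) (ϑ μ : ℝ) (hϑ : 1 < ϑ) (hμ : 0 < μ)
    (hdiff : ∀ v, Differentiable ℝ (L v))
    (hlo : ∀ (v : V) (t : ℝ), 1 ≤ deriv (L v) t)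
    (hhi : ∀ (v : V) (t : ℝ), deriv (L v) t ≤ ϑ * (1 + μ))
    (hadm : GCS.Admissible G δ O L ϑ μ)
    (s : ℕ) (hnc : GCS.NonnegCycles G δ O (s : ℝ))
    (v : V) (t t' : ℝ) (htt' : t < t')
    (hpos : ∀ τ ∈ Set.Ioo t t', 0 < GCS.Psi G δ O (s : ℝ) L v τ) :
    GCS.Psi G δ O (s : ℝ) L v t' ≤
      GCS.Psi G δ O (s : ℝ) L v t + ϑ * (t' - t) - (L v t' - L v t) := by
  classical
  have hs0 : (0:ℝ) ≤ (s : ℝ) := Nat.cast_nonneg s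
  haveI : DecidableRel G.Adj := Classical.decRel _
  haveI hIne : Nonempty ((w : V) × G.Path v w) := ⟨⟨v, SimpleGraph.Path.nil⟩⟩
  let g : ((w : V) × G.Path v w) → ℝ → ℝ :=
    fun i τ => L i.1 τ - GCS.walkWt δ O (s : ℝ) i.2.1
  have hne : (Finset.univ : Finset ((w : V) × G.Path v w)).Nonempty := Finset.univ_nonempty
  let M : ℝ → ℝ := fun τ => Finset.univ.sup' hne fun i => g i τ
  have hbyp : ∀ {w : V} (p : G.Walk v w),
      GCS.walkWt δ O (s : ℝ) p.bypass ≤ GCS.walkWt δ O (s : ℝ) p :=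
    fun p => GCS.walkWt_bypass_le hδpos hδsym hOanti hs0 hnc p
  have hgle : ∀ (i : ((w : V) × G.Path v w)) (τ : ℝ), g i τ ≤ M τ :=
    fun i τ => by
    show g i τ ≤ Finset.univ.sup' hne fun j => g j τ
    exact Finset.le_sup' (fun j => g j τ) (Finset.mem_univ i)
  have hbd : ∀ (τ x : ℝ),
      (∃ w : V, ∃ p : G.Walk v w, x = L w τ - L v τ - GCS.walkWt δ O (s : ℝ) p) →
      x ≤ M τ - L v τ := by
    rintro τ x ⟨w, p, rfl⟩
    have h1 := hbyp p
    have h2 := hgle ⟨w, ⟨p.bypass, p.bypass_isPath⟩⟩ τ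
    simp only [g] at h2
    linarith
  have hPsiM : ∀ τ : ℝ, GCS.Psi G δ O (s : ℝ) L v τ = M τ - L v τ := by
    intro τ
    apply le_antisymm
    · exact csSup_le ⟨L v τ - L v τ - GCS.walkWt δ O (s : ℝ) (SimpleGraph.Walk.nil : G.Walk v v),
        v, SimpleGraph.Walk.nil, rfl⟩ fun x hx => hbd τ x hx
    · obtain ⟨j, -, hj⟩ := Finset.exists_mem_eq_sup' hne fun i => g i τ
      apply le_csSup ⟨M τ - L v τ, fun x hx => hbd τ x hx⟩
      refine ⟨j.1, j.2.1, ?_⟩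
      show Finset.univ.sup' hne (fun i => g i τ) - L v τ = _
      rw [hj]
      show L j.1 τ - GCS.walkWt δ O (s : ℝ) j.2.1 - L v τ = _
      ring
  have hgdiff : ∀ i : ((w : V) × G.Path v w), Differentiable ℝ (g i) :=
    fun i => (hdiff i.1).sub_const _
  have hMcont : Continuous M :=
    GCS.continuous_finset_sup' (fun i => (hgdiff i).continuous) _ hne
  -- the maximizer satisfies the slow condition wherever Ψ > 0
  have key : ∀ x : ℝ, 0 < GCS.Psi G δ O (s : ℝ) L v x →
      ∀ j : ((w : V) × G.Path v w), M x = g j x → deriv (L j.1) x ≤ ϑ := by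
    intro x hPx j hMg
    obtain ⟨w, p, hp⟩ := j
    apply (hadm w x).1
    refine ⟨s, ?_, ?_⟩
    · -- existence clause
      cases p with
      | nil =>
        exfalso
        rw [hPsiM x, hMg] at hPx
        simp only [g, GCS.walkWt_nil] at hPx
        linarith
      | cons h' r =>
        obtain ⟨u, q, hadj, hcat⟩ := SimpleGraph.Walk.exists_cons_eq_concat h' r
        refine ⟨u, hadj.symm, ?_⟩
        have h2 := hgle ⟨u, ⟨q.bypass, q.bypass_isPath⟩⟩ x
        have h3 : GCS.walkWt δ O (s : ℝ) (SimpleGraph.Walk.cons h' r)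
            = GCS.walkWt δ O (s : ℝ) q + GCS.edgeWt δ O (s : ℝ) u w := by
          rw [hcat, GCS.walkWt_concat]
        have h4 := hbyp q
        have h5 := hδsym u w hadj
        have h6 := hOanti u w hadj
        simp only [g] at h2 hMg
        simp only [GCS.edgeWt] at h3
        rw [h5, h6] at h3
        linarith
    · -- universal clause
      intro u hu
      have h2 := hgle ⟨u, ⟨(p.concat hu).bypass, SimpleGraph.Walk.bypass_isPath _⟩⟩ x
      have h4 := hbyp (p.concat hu)
      have h3 : GCS.walkWt δ O (s : ℝ) (p.concat hu)
          = GCS.walkWt δ O (s : ℝ) p + GCS.edgeWt δ O (s : ℝ) w u :=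
        GCS.walkWt_concat p hu
      simp only [g] at h2 hMg
      simp only [GCS.edgeWt] at h3
      linarith
  -- slope bound for M on (t, t')
  have bound : ∀ x ∈ Set.Ioo t t', ∀ r : ℝ, ϑ < r →
      ∀ᶠ z in nhdsWithin x (Set.Ioi x), slope M x z < r := by
    intro x hx' r hr
    have hPx : 0 < GCS.Psi G δ O (s : ℝ) L v x := hpos x hx'
    have hr0 : (0:ℝ) < r := lt_trans (lt_trans zero_lt_one hϑ) hr
    have hall : ∀ i : ((w : V) × G.Path v w),
        ∀ᶠ z in nhdsWithin x (Set.Ioi x), g i z < M x + r * (z - x) := by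
      intro i
      by_cases hi : g i x = M x
      · have hd : deriv (L i.1) x ≤ ϑ := key x hPx i hi.symm
        have hgd : deriv (g i) x = deriv (L i.1) x := by
          simp only [g]
          exact deriv_sub_const _
        have hda : HasDerivAt (g i) (deriv (g i) x) x := (hgdiff i x).hasDerivAt
        have hslope := hasDerivAt_iff_tendsto_slope.1 hda
        have hlt : deriv (g i) x < r := by rw [hgd]; linarith
        have h1 : ∀ᶠ z in nhdsWithin x {x}ᶜ, slope (g i) x z < r :=
          hslope.eventually_lt_const hlt
        have hmono : nhdsWithin x (Set.Ioi x) ≤ nhdsWithin x {x}ᶜ :=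
          nhdsWithin_mono x fun z hz => Set.mem_compl_singleton_iff.2 (ne_of_gt hz)
        filter_upwards [h1.filter_mono hmono, eventually_mem_nhdsWithin] with z hz hxz
        have hzx : 0 < z - x := sub_pos.2 (Set.mem_Ioi.1 hxz)
        rw [slope_def_field] at hz
        have := (div_lt_iff₀ hzx).1 hz
        linarith [hi]
      · have hlt : g i x < M x := lt_of_le_of_ne (hgle i x) hi
        have h1 : ∀ᶠ z in nhds x, g i z < M x :=
          ((hgdiff i).continuous.tendsto x).eventually_lt_const hlt
        filter_upwards [h1.filter_mono nhdsWithin_le_nhds, eventually_mem_nhdsWithin]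
          with z hz hxz
        have : 0 < r * (z - x) := mul_pos hr0 (sub_pos.2 (Set.mem_Ioi.1 hxz))
        linarith
    filter_upwards [Filter.eventually_all.2 hall, eventually_mem_nhdsWithin] with z hz hxz
    have hzx : 0 < z - x := sub_pos.2 (Set.mem_Ioi.1 hxz)
    have hMz : M z < M x + r * (z - x) := by
      refine (Finset.sup'_lt_iff hne).2 fun i _ => hz i
    rw [slope_def_field]
    rw [div_lt_iff₀ hzx]
    linarith
  -- fencing on [c, t'] for c ∈ (t, t')
  have main : ∀ c ∈ Set.Ioo t t', M t' ≤ M c + ϑ * (t' - c) := by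
    intro c hc
    have hct' : c ≤ t' := le_of_lt hc.2
    have hB : Continuous fun x : ℝ => M c + ϑ * (x - c) :=
      continuous_const.add (continuous_const.mul (continuous_id.sub continuous_const))
    have hB' : ∀ x ∈ Set.Ico c t',
        HasDerivWithinAt (fun x : ℝ => M c + ϑ * (x - c)) ϑ (Set.Ici x) x := by
      intro x _
      have h1 : HasDerivWithinAt (fun x : ℝ => ϑ * (x - c)) (ϑ * 1) (Set.Ici x) x :=
        ((hasDerivWithinAt_id x _).sub_const c).const_mul ϑ
      simpa using h1.const_add (M c)
    have hbnd : ∀ x ∈ Set.Ico c t', ∀ r : ℝ, ϑ < r →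
        ∃ᶠ z in nhdsWithin x (Set.Ioi x), slope M x z < r := by
      intro x hx r hr
      exact (bound x ⟨lt_of_lt_of_le hc.1 hx.1, hx.2⟩ r hr).frequently
    have := image_le_of_liminf_slope_right_le_deriv_boundary (f := M) (a := c) (b := t')
      hMcont.continuousOn (by simp) hB.continuousOn hB' hbnd (Set.right_mem_Icc.2 hct')
    simpa using this
  -- pass to the limit c → t⁺
  have hlim : Filter.Tendsto (fun c => M c + ϑ * (t' - c)) (nhdsWithin t (Set.Ioi t))
      (nhds (M t + ϑ * (t' - t))) :=
    ((hMcont.add (continuous_const.mul (continuous_const.sub continuous_id))).tendsto t).mono_left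
      nhdsWithin_le_nhds
  have hev : ∀ᶠ c in nhdsWithin t (Set.Ioi t), M t' ≤ M c + ϑ * (t' - c) := by
    filter_upwards [Ioo_mem_nhdsGT_of_mem (Set.left_mem_Ico.2 htt')] with c hc
    exact main c hc
  have hfin : M t' ≤ M t + ϑ * (t' - t) := ge_of_tendsto hlim hev
  rw [hPsiM t', hPsiM t]
  linarith
end

section
/- Assume the execution is admissible. Let s ∈ ℕ, s ≥ 1, be such that every directed cycle has nonnegative ω^{s−1/2}-weight. Then for every node v ∈ V and all times t < t', L_v(t') − L_v(t) ≥ (t'−t) + min{ Ψ_v^{s−1/2}(t), μ·(t'−t) − Ψ^{s−1/2}(t) + Ψ_v^{s−1/2}(t) }. -/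
set_option linter.unusedSectionVars false
set_option maxHeartbeats 4000000


open SimpleGraph

section CatchupAux

open GCS SimpleGraph Walk

variable {V : Type*} [DecidableEq V] {G : SimpleGraph V} {δ O : V → V → ℝ} {σ : ℝ}

lemma walkWt_nil {v : V} : walkWt (G := G) δ O σ (Walk.nil (u := v)) = 0 := by
  simp [walkWt]

lemma walkWt_cons {u v w : V} (h : G.Adj u v) (p : G.Walk v w) :
    walkWt δ O σ (Walk.cons h p) = edgeWt δ O σ u v + walkWt δ O σ p := by
  simp [walkWt, Walk.darts_cons]

lemma walkWt_append {u v w : V} (p : G.Walk u v) (q : G.Walk v w) :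
    walkWt δ O σ (p.append q) = walkWt δ O σ p + walkWt δ O σ q := by
  simp [walkWt, Walk.darts_append]

lemma path_edge_case {y x : V} (p : G.Walk y x) (hp : p.IsPath) (h : G.Adj x y)
    (he : s(x, y) ∈ p.edges) : walkWt δ O σ p = edgeWt δ O σ y x := by
  cases p with
  | nil => simp at he
  | cons h₂ rest =>
    rename_i z
    rw [Walk.edges_cons, List.mem_cons] at he
    rcases he with he | he
    · have hxz : x = z := by
        rw [Sym2.eq_iff] at he
        rcases he with ⟨h1, _⟩ | ⟨h1, _⟩
        · exact absurd h1 h.ne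
        · exact h1
      subst hxz
      have hrest : rest = Walk.nil := (Walk.isPath_iff_eq_nil).1
        ((Walk.cons_isPath_iff _ _).1 hp).1
      subst hrest
      rw [walkWt_cons, walkWt_nil, add_zero]
    · exact absurd (Walk.snd_mem_support_of_mem_edges rest he)
        ((Walk.cons_isPath_iff _ _).1 hp).2

lemma closed_and_bypass
    (hδpos : ∀ v w, G.Adj v w → 0 < δ v w)
    (hδsym : ∀ v w, G.Adj v w → δ v w = δ w v)
    (hOanti : ∀ v w, G.Adj v w → O v w = -O w v)
    (hσ : 0 < σ) (hnc : NonnegCycles G δ O σ) :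
    ∀ n : ℕ,
      (∀ (x : V) (c : G.Walk x x), c.length ≤ n → 0 ≤ walkWt δ O σ c) ∧
      (∀ (x y : V) (p : G.Walk x y), p.length ≤ n →
        walkWt δ O σ p.bypass ≤ walkWt δ O σ p) := by
  intro n
  induction n using Nat.strong_induction_on with
  | _ n IH =>
    have hQ : ∀ (x : V) (c : G.Walk x x), c.length ≤ n → 0 ≤ walkWt δ O σ c := by
      intro x c hlen
      cases c with
      | nil => simp [walkWt]
      | cons h q =>
        rename_i y
        rw [Walk.length_cons] at hlen
        have hqlen : q.length < n := by omega
        have hble : walkWt δ O σ q.bypass ≤ walkWt δ O σ q := (IH q.length hqlen).2 _ _ q le_rfl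
        have hpq : q.bypass.IsPath := q.bypass_isPath
        rw [walkWt_cons]
        by_cases he : s(x, y) ∈ q.bypass.edges
        · have hwt := path_edge_case (δ := δ) (O := O) (σ := σ) q.bypass hpq h he
          have h1 : 0 ≤ edgeWt δ O σ x y + edgeWt δ O σ y x := by
            have h2 := hδpos x y h
            have h3 := hδsym x y h
            have h4 := hOanti x y h
            simp only [edgeWt]
            nlinarith
          linarith
        · have hcyc : (Walk.cons h q.bypass).IsCycle :=
            (Walk.cons_isCycle_iff _ h).2 ⟨hpq, he⟩
          have h0 := hnc x _ hcyc
          rw [walkWt_cons] at h0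
          linarith
    refine ⟨hQ, ?_⟩
    intro x y p hlen
    cases p with
    | nil => simp [Walk.bypass]
    | cons h q =>
      rename_i z
      rw [Walk.length_cons] at hlen
      have hqlen : q.length < n := by omega
      have hble : walkWt δ O σ q.bypass ≤ walkWt δ O σ q := (IH q.length hqlen).2 _ _ q le_rfl
      show walkWt δ O σ (Walk.cons h q).bypass ≤ _
      rw [Walk.bypass]
      split_ifs with hs
      · have hts := q.bypass.take_spec hs
        have hwt : walkWt δ O σ (q.bypass.takeUntil x hs) +
            walkWt δ O σ (q.bypass.dropUntil x hs) = walkWt δ O σ q.bypass := by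
          rw [← walkWt_append, hts]
        have hclosed : 0 ≤ walkWt δ O σ (Walk.cons h (q.bypass.takeUntil x hs)) := by
          apply hQ
          rw [Walk.length_cons]
          have h1 := Walk.length_takeUntil_le q.bypass hs
          have h2 := q.length_bypass_le
          omega
        rw [walkWt_cons] at hclosed
        rw [walkWt_cons]
        linarith
      · rw [walkWt_cons, walkWt_cons]
        linarith

lemma psi_spec [Fintype V]
    (hbyp : ∀ (x y : V) (p : G.Walk x y), walkWt δ O σ p.bypass ≤ walkWt δ O σ p)
    (L : V → ℝ → ℝ) (u : V) (tt : ℝ) :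
    (∀ (w : V) (p : G.Walk u w), L w tt - L u tt - walkWt δ O σ p ≤ Psi G δ O σ L u tt) ∧
    ∃ (w : V) (p : G.Walk u w), Psi G δ O σ L u tt = L w tt - L u tt - walkWt δ O σ p := by
  haveI : DecidableRel G.Adj := Classical.decRel _
  haveI : Nonempty (Σ w : V, G.Path u w) := ⟨⟨u, ⟨Walk.nil, Walk.IsPath.nil⟩⟩⟩
  set f : (Σ w : V, G.Path u w) → ℝ := fun z => L z.1 tt - L u tt - walkWt δ O σ z.2.1 with hf
  set M := Finset.univ.sup' Finset.univ_nonempty f with hM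
  have hub : ∀ (w : V) (p : G.Walk u w), L w tt - L u tt - walkWt δ O σ p ≤ M := by
    intro w p
    have h1 := hbyp u w p
    have h2 : f ⟨w, ⟨p.bypass, p.bypass_isPath⟩⟩ ≤ M :=
      Finset.le_sup' f (Finset.mem_univ _)
    simp only [hf] at h2
    linarith
  have hmem : ∃ (w : V) (p : G.Walk u w), M = L w tt - L u tt - walkWt δ O σ p := by
    obtain ⟨b, _, hb⟩ := Finset.exists_mem_eq_sup' Finset.univ_nonempty f
    exact ⟨b.1, b.2.1, hb⟩
  have hPsiM : Psi G δ O σ L u tt = M := by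
    apply le_antisymm
    · apply csSup_le
      · exact ⟨_, u, Walk.nil, rfl⟩
      · rintro x ⟨w, p, rfl⟩
        exact hub w p
    · obtain ⟨w, p, hb⟩ := hmem
      refine le_csSup ⟨M, ?_⟩ ⟨w, p, hb⟩
      rintro x ⟨w', p', rfl⟩
      exact hub w' p'
  refine ⟨fun w p => ?_, ?_⟩
  · rw [hPsiM]; exact hub w p
  · rw [hPsiM]; exact hmem

end CatchupAux

/-- catch-up lemma:
`L_v(t') - L_v(t) ≥ (t'-t) + min{Ψ_v^{s-1/2}(t), μ(t'-t) - Ψ^{s-1/2}(t) + Ψ_v^{s-1/2}(t)}`. -/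
theorem catchup
    {V : Type*} [Fintype V] [DecidableEq V] [Nonempty V]
    (G : SimpleGraph V) (hconn : G.Connected)
    (δ O : V → V → ℝ)
    (hδpos : ∀ v w, G.Adj v w → 0 < δ v w)
    (hδsym : ∀ v w, G.Adj v w → δ v w = δ w v)
    (hOanti : ∀ v w, G.Adj v w → O v w = -O w v)
    (L : V → ℝ → ℝ) (ϑ μ : ℝ) (hϑ : 1 < ϑ) (hμ : 0 < μ)
    (hdiff : ∀ v, Differentiable ℝ (L v))
    (hlo : ∀ (v : V) (t : ℝ), 1 ≤ deriv (L v) t)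
    (hhi : ∀ (v : V) (t : ℝ), deriv (L v) t ≤ ϑ * (1 + μ))
    (hadm : GCS.Admissible G δ O L ϑ μ)
    (s : ℕ) (hs1 : 1 ≤ s) (hnc : GCS.NonnegCycles G δ O ((s : ℝ) - 1/2))
    (v : V) (t t' : ℝ) (htt' : t < t') :
    (t' - t) + min (GCS.Psi G δ O ((s : ℝ) - 1/2) L v t)
        (μ * (t' - t) - GCS.PsiAll G δ O ((s : ℝ) - 1/2) L t
          + GCS.Psi G δ O ((s : ℝ) - 1/2) L v t) ≤
      L v t' - L v t := by
  classical
  set σ : ℝ := (s : ℝ) - 1/2 with hσdef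
  have hs1' : (1 : ℝ) ≤ (s : ℝ) := by exact_mod_cast hs1
  have hσpos : 0 < σ := by rw [hσdef]; linarith
  have hcast : ((s - 1 : ℕ) : ℝ) = (s : ℝ) - 1 := by
    rw [Nat.cast_sub hs1, Nat.cast_one]
  have hbyp : ∀ (x y : V) (p : G.Walk x y),
      GCS.walkWt δ O σ p.bypass ≤ GCS.walkWt δ O σ p :=
    fun x y p => (closed_and_bypass hδpos hδsym hOanti hσpos hnc p.length).2 x y p le_rfl
  have spec := fun (u : V) => psi_spec hbyp L u t
  set Ψ : V → ℝ := fun u => GCS.Psi G δ O σ L u t with hΨdef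
  set ΨA : ℝ := GCS.PsiAll G δ O σ L t with hΨAdef
  have hΨub : ∀ (u w : V) (p : G.Walk u w),
      L w t - L u t - GCS.walkWt δ O σ p ≤ Ψ u := fun u => (spec u).1
  have hΨatt : ∀ u : V, ∃ (w : V) (p : G.Walk u w),
      Ψ u = L w t - L u t - GCS.walkWt δ O σ p := fun u => (spec u).2
  have hΨ0 : ∀ u, 0 ≤ Ψ u := by
    intro u
    have h := hΨub u u Walk.nil
    rw [walkWt_nil] at h
    linarith
  have hΨA : ∀ u, Ψ u ≤ ΨA := by
    intro u
    rw [hΨAdef]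
    unfold GCS.PsiAll
    exact le_ciSup (Finite.bddAbove_range _) u
  have hΨA0 : 0 ≤ ΨA := le_trans (hΨ0 v) (hΨA v)
  have hcont : ∀ u : V, Continuous (L u) := fun u => (hdiff u).continuous
  have hgain : ∀ (u : V) (a b : ℝ), a ≤ b → b - a ≤ L u b - L u a := by
    intro u a b hab
    have hmono : Monotone (fun τ => L u τ - τ) := by
      apply monotone_of_deriv_nonneg ((hdiff u).sub differentiable_id)
      intro τ
      rw [deriv_sub ((hdiff u) τ) differentiableAt_id, deriv_id]
      linarith [hlo u τ]
    have := hmono hab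
    simp only at this
    linarith
  -- main invariant, for any μ' < μ
  have key : ∀ μ', 0 < μ' → μ' < μ →
      (t' - t) + μ' * (min t' (t + ΨA / μ') - t) + Ψ v - ΨA ≤ L v t' - L v t := by
    intro μ' hμ'0 hμ'μ
    set T' : ℝ := t + ΨA / μ' with hT'def
    have hT't : t ≤ T' := by
      rw [hT'def]
      have := div_nonneg hΨA0 hμ'0.le
      linarith
    have hT'Ψ : μ' * (T' - t) = ΨA := by
      rw [hT'def]
      field_simp
      ring
    set g : V → ℝ → ℝ :=
      fun u τ => L u τ - L u t - (τ - t) - μ' * (min τ T' - t) - Ψ u + ΨA with hgdef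
    have hgcont : ∀ u, Continuous (g u) := by
      intro u
      simp only [hgdef]
      exact ((((((hcont u).sub continuous_const).sub
        (continuous_id.sub continuous_const)).sub
        (continuous_const.mul ((continuous_id.min continuous_const).sub
          continuous_const))).sub continuous_const).add continuous_const)
    suffices hkey : ∀ u, ∀ τ ∈ Set.Icc t t', 0 ≤ g u τ by
      have h := hkey v t' ⟨htt'.le, le_rfl⟩
      simp only [hgdef] at h
      linarith
    by_contra hcon
    push_neg at hcon
    obtain ⟨u₁, τ₁, hτ₁, hneg₁⟩ := hcon
    set S : Set ℝ := {τ | τ ∈ Set.Icc t t' ∧ ∃ u, g u τ < 0} with hSdef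
    have hSne : S.Nonempty := ⟨τ₁, hτ₁, u₁, hneg₁⟩
    have hSbdd : BddBelow S := ⟨t, fun τ hτ => hτ.1.1⟩
    set τ₀ := sInf S with hτ₀def
    have hτ₀t : t ≤ τ₀ := le_csInf hSne fun τ hτ => hτ.1.1
    have hτ₀t' : τ₀ ≤ t' := le_trans (csInf_le hSbdd ⟨hτ₁, u₁, hneg₁⟩) hτ₁.2
    have hbefore : ∀ τ, t ≤ τ → τ < τ₀ → ∀ u, 0 ≤ g u τ := by
      intro τ hτt hττ₀ u
      by_contra hg
      push_neg at hg
      have hmem : τ ∈ S := ⟨⟨hτt, le_trans hττ₀.le hτ₀t'⟩, u, hg⟩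
      exact absurd (csInf_le hSbdd hmem) (not_le.2 hττ₀)
    have hg0 : ∀ u, 0 ≤ g u τ₀ := by
      intro u
      rcases eq_or_lt_of_le hτ₀t with heq | hlt
      · have hgt : g u t = ΨA - Ψ u := by
          simp only [hgdef]
          rw [min_eq_left hT't]
          ring
        rw [← heq, hgt]
        linarith [hΨA u]
      · have htend : Filter.Tendsto (g u) (nhdsWithin τ₀ (Set.Iio τ₀)) (nhds (g u τ₀)) :=
          ((hgcont u).continuousAt).continuousWithinAt.tendsto
        refine ge_of_tendsto htend ?_
        filter_upwards [Ioo_mem_nhdsLT_of_mem (Set.mem_Ioc.2 ⟨hlt, le_rfl⟩)] with τ hτ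
        exact hbefore τ hτ.1.le hτ.2 u
    have hfreqS : ∃ᶠ τ in nhdsWithin τ₀ (Set.Ioi τ₀), τ ∈ S := by
      rw [Filter.frequently_iff]
      intro U hU
      obtain ⟨ε, hε, hsub⟩ := mem_nhdsGT_iff_exists_Ioo_subset.1 hU
      obtain ⟨a, haS, ha⟩ := exists_lt_of_csInf_lt hSne (show sInf S < ε from hε)
      have haτ₀ : τ₀ ≤ a := csInf_le hSbdd haS
      have hne : τ₀ ≠ a := by
        rintro rfl
        obtain ⟨_, u, hu⟩ := haS
        exact absurd (hg0 u) (not_le.2 hu)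
      exact ⟨a, hsub ⟨lt_of_le_of_ne haτ₀ hne, ha⟩, haS⟩
    have hfrequ : ∃ u, ∃ᶠ τ in nhdsWithin τ₀ (Set.Ioi τ₀),
        (τ ∈ Set.Icc t t' ∧ g u τ < 0) := by
      by_contra hcon2
      push_neg at hcon2
      have hev : ∀ᶠ τ in nhdsWithin τ₀ (Set.Ioi τ₀),
          ∀ u, ¬(τ ∈ Set.Icc t t' ∧ g u τ < 0) :=
          Filter.eventually_all.2 fun u => (hcon2 u).mono fun τ h hc => absurd hc.2 (not_lt.2 (h hc.1))
      obtain ⟨τ, hτS, hτall⟩ := (hfreqS.and_eventually hev).exists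
      obtain ⟨hIcc, u, hu⟩ := hτS
      exact hτall u ⟨hIcc, hu⟩
    obtain ⟨u, hufreq⟩ := hfrequ
    have hgu0 : g u τ₀ = 0 := by
      refine le_antisymm ?_ (hg0 u)
      by_contra hpos
      push_neg at hpos
      have hev : ∀ᶠ τ in nhdsWithin τ₀ (Set.Ioi τ₀), 0 < g u τ := by
        apply Filter.Eventually.filter_mono nhdsWithin_le_nhds
        have := (hgcont u).continuousAt (x := τ₀) |>.preimage_mem_nhds (Ioi_mem_nhds hpos)
        filter_upwards [this] with τ hτ
        exact hτ
      obtain ⟨τ, ⟨_, hlt⟩, hgt⟩ := (hufreq.and_eventually hev).exists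
      linarith
    by_cases hcase : τ₀ < T'
    · -- fast regime
      have hminτ₀ : min τ₀ T' = τ₀ := min_eq_left hcase.le
      have hgaineq : L u τ₀ - L u t = (τ₀ - t) + μ' * (τ₀ - t) + Ψ u - ΨA := by
        have h := hgu0
        simp only [hgdef] at h
        rw [hminτ₀] at h
        linarith
      have hgainge : ∀ x, (τ₀ - t) + μ' * (τ₀ - t) + Ψ x - ΨA ≤ L x τ₀ - L x t := by
        intro x
        have h := hg0 x
        simp only [hgdef] at h
        rw [hminτ₀] at h
        linarith
      have hΨupos : 0 < Ψ u := by
        have h1 := hgain u t τ₀ hτ₀t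
        have h2 : μ' * (τ₀ - t) < μ' * (T' - t) :=
          mul_lt_mul_of_pos_left (by linarith) hμ'0
        linarith [hT'Ψ, hgaineq]
      obtain ⟨w₀, p₀, hp₀⟩ := hΨatt u
      have hfast : GCS.FastCondAt G δ O L u τ₀ (s - 1) := by
        constructor
        · cases p₀ with
          | nil =>
            exfalso
            rw [walkWt_nil] at hp₀
            simp only [sub_self, sub_zero] at hp₀
            linarith
          | cons hadj p₂ =>
            rename_i x
            refine ⟨x, hadj, ?_⟩
            rw [walkWt_cons] at hp₀
            have hXub := hΨub x w₀ p₂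
            have hLx := hgainge x
            have heq : (4 * ((s : ℝ) - 1) + 2) * δ u x = 4 * σ * δ u x := by
              rw [hσdef]; ring
            rw [hcast]
            simp only [GCS.edgeWt] at hp₀
            linarith [hgaineq]
        · intro w hadj
          have hcons := hΨub w w₀ (Walk.cons hadj.symm p₀)
          rw [walkWt_cons] at hcons
          have hLw := hgainge w
          have heq : (4 * ((s : ℝ) - 1) + 2) * δ u w = 4 * σ * δ u w := by
            rw [hσdef]; ring
          have hδe2 : 4 * σ * δ w u = 4 * σ * δ u w := by rw [hδsym u w hadj]
          have hOe : O w u = -O u w := by rw [hOanti u w hadj]; ring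
          rw [hcast]
          simp only [GCS.edgeWt] at hcons
          linarith [hgaineq, hp₀]
      have hderiv := (hadm u τ₀).2 ⟨s - 1, hfast⟩
      have hloc : (fun τ => L u τ - (1 + μ') * τ + ((1 + μ') * t - L u t - Ψ u + ΨA))
          =ᶠ[nhds τ₀] g u := by
        filter_upwards [Iio_mem_nhds hcase] with τ hτ
        simp only [hgdef]
        rw [min_eq_left (le_of_lt hτ)]
        ring
      have hD : HasDerivAt (g u) (deriv (L u) τ₀ - (1 + μ')) τ₀ := by
        have h2 := ((hdiff u) τ₀).hasDerivAt
        have h3 : HasDerivAt (fun τ : ℝ => (1 + μ') * τ) (1 + μ') τ₀ := by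
          simpa using (hasDerivAt_id τ₀).const_mul (1 + μ')
        have h1 : HasDerivAt
            (fun τ : ℝ => L u τ - (1 + μ') * τ + ((1 + μ') * t - L u t - Ψ u + ΨA))
            (deriv (L u) τ₀ - (1 + μ')) τ₀ := (h2.sub h3).add_const _
        exact h1.congr_of_eventuallyEq hloc.symm
      have hDpos : 0 < deriv (L u) τ₀ - (1 + μ') := by linarith
      have hslope : Filter.Tendsto (slope (g u) τ₀) (nhdsWithin τ₀ (Set.Ioi τ₀))
          (nhds (deriv (L u) τ₀ - (1 + μ'))) :=
        (hasDerivAt_iff_tendsto_slope.1 hD).mono_left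
          (nhdsWithin_mono _ fun x hx => Set.mem_compl_singleton_iff.2 (ne_of_gt hx))
      have hev2 : ∀ᶠ τ in nhdsWithin τ₀ (Set.Ioi τ₀), 0 < slope (g u) τ₀ τ :=
        hslope.eventually (eventually_gt_nhds hDpos)
      have hev3 : ∀ᶠ τ in nhdsWithin τ₀ (Set.Ioi τ₀), τ ∈ Set.Ioi τ₀ :=
        eventually_mem_nhdsWithin
      obtain ⟨τ, ⟨hτIcc, hτneg⟩, hsl, hτgt⟩ := (hufreq.and_eventually (hev2.and hev3)).exists
      rw [slope_def_field] at hsl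
      have hd : 0 < τ - τ₀ := sub_pos.2 hτgt
      have hnum : 0 < g u τ - g u τ₀ := by
        rcases div_pos_iff.1 hsl with ⟨h1, _⟩ | ⟨_, h2⟩
        · exact h1
        · linarith
      rw [hgu0] at hnum
      linarith
    · push_neg at hcase
      have hminτ₀ : min τ₀ T' = T' := min_eq_right hcase
      have hev : ∀ᶠ τ in nhdsWithin τ₀ (Set.Ioi τ₀), τ ∈ Set.Ioi τ₀ :=
        eventually_mem_nhdsWithin
      obtain ⟨τ, ⟨hτIcc, hτneg⟩, hτgt⟩ := (hufreq.and_eventually hev).exists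
      have hmin : min τ T' = T' := min_eq_right (le_trans hcase (le_of_lt hτgt))
      have hga := hgain u τ₀ τ (le_of_lt hτgt)
      have h1 := hgu0
      simp only [hgdef] at h1 hτneg
      rw [hminτ₀] at h1
      rw [hmin] at hτneg
      linarith
  -- conclusion
  rw [show GCS.Psi G δ O σ L v t = Ψ v from rfl]
  set Δ := t' - t with hΔdef
  have hΔpos : 0 < Δ := sub_pos.2 htt'
  have final : ∀ μ'', 0 < μ'' → μ'' < μ →
      Δ + min (Ψ v) (μ'' * Δ - ΨA + Ψ v) ≤ L v t' - L v t := by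
    intro μ'' h0 hm
    have hkey := key μ'' h0 hm
    rcases le_total t' (t + ΨA / μ'') with hle | hle
    · rw [min_eq_left hle] at hkey
      have := min_le_right (Ψ v) (μ'' * Δ - ΨA + Ψ v)
      rw [hΔdef] at *
      linarith
    · rw [min_eq_right hle] at hkey
      have hTT : μ'' * (t + ΨA / μ'' - t) = ΨA := by field_simp; ring
      have := min_le_left (Ψ v) (μ'' * Δ - ΨA + Ψ v)
      linarith
  by_contra hcon
  push_neg at hcon
  set m := min (Ψ v) (μ * Δ - ΨA + Ψ v) with hm
  set ε := Δ + m - (L v t' - L v t) with hε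
  have hεpos : 0 < ε := by rw [hε]; linarith
  set d := min (ε / (2 * Δ)) (μ / 2) with hd
  have hdpos : 0 < d := lt_min (div_pos hεpos (by linarith)) (half_pos hμ)
  have hμ'0 : 0 < μ - d := by
    have : d ≤ μ / 2 := min_le_right _ _
    linarith
  have hfin := final (μ - d) hμ'0 (by linarith)
  have hminle : m - d * Δ ≤ min (Ψ v) ((μ - d) * Δ - ΨA + Ψ v) := by
    apply le_min
    · have h1 := min_le_left (Ψ v) (μ * Δ - ΨA + Ψ v)
      nlinarith [mul_nonneg hdpos.le hΔpos.le]
    · have h1 := min_le_right (Ψ v) (μ * Δ - ΨA + Ψ v)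
      nlinarith
  have hdΔ : d * Δ ≤ ε / 2 := by
    have h1 : d ≤ ε / (2 * Δ) := min_le_left _ _
    have h2 : (ε / (2 * Δ)) * Δ = ε / 2 := by field_simp
    nlinarith
  have hstep : Δ + (m - d * Δ) ≤ Δ + min (Ψ v) ((μ - d) * Δ - ΨA + Ψ v) := by
    linarith [hminle]
  have hstep2 : Δ + (m - d * Δ) ≤ L v t' - L v t := le_trans hstep hfin
  have h8 : ε ≤ d * Δ := by rw [hε]; linarith [hstep2]
  have h9 : ε ≤ ε / 2 := le_trans h8 hdΔ
  linarith [h9, hεpos]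
end

section
/- Assume the execution is admissible. Let s ∈ ℕ, s ≥ 1, be such that every directed cycle has nonnegative ω^{s−1/2}-weight, let v ∈ V, and let t < t' be times with t' ≥ t + Ψ^{s−1/2}(t)/μ. Then L_v(t') − L_v(t) ≥ (t'−t) + Ψ_v^s(t). -/
open SimpleGraph

namespace GCSAux

open GCS SimpleGraph Set

variable {V : Type*} {G : SimpleGraph V} {δ O : V → V → ℝ} {σ σ' : ℝ}

lemma walkWt_nil {v : V} : walkWt (G := G) δ O σ (Walk.nil : G.Walk v v) = 0 := by
  simp [walkWt]

lemma walkWt_cons {u x w : V} (h : G.Adj u x) (p : G.Walk x w) :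
    walkWt δ O σ (Walk.cons h p) = edgeWt δ O σ u x + walkWt δ O σ p := by
  simp [walkWt]

lemma walkWt_append {u x w : V} (p : G.Walk u x) (q : G.Walk x w) :
    walkWt δ O σ (p.append q) = walkWt δ O σ p + walkWt δ O σ q := by
  simp [walkWt, Walk.darts_append]

lemma walkWt_mono (hδpos : ∀ v w, G.Adj v w → 0 < δ v w) (hσ : σ ≤ σ') {u w : V}
    (p : G.Walk u w) : walkWt δ O σ p ≤ walkWt δ O σ' p := by
  unfold walkWt
  apply List.sum_le_sum
  intro d _
  have hd : 0 < δ d.toProd.1 d.toProd.2 := hδpos _ _ d.adj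
  unfold edgeWt
  nlinarith

lemma path_loop_aux {v a : V} (hne : v ≠ a) {q : G.Walk a v} (hq : q.IsPath)
    (he : s(v, a) ∈ q.edges) : walkWt δ O σ q = edgeWt δ O σ a v := by
  cases q with
  | nil => simp at he
  | cons h' q' =>
    rename_i b
    rw [Walk.cons_isPath_iff] at hq
    rw [Walk.edges_cons, List.mem_cons] at he
    rcases he with he | he
    · have := Sym2.eq_iff.mp he
      rcases this with ⟨rfl, rfl⟩ | ⟨rfl, -⟩
      · exact absurd rfl hne
      · have : q' = Walk.nil := Walk.isPath_iff_eq_nil.mp hq.1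
        subst this
        rw [walkWt_cons, walkWt_nil, add_zero]
    · exact absurd (Walk.snd_mem_support_of_mem_edges q' he) hq.2


lemma closedWalk_nonneg_aux [DecidableEq V] (hδpos : ∀ v w, G.Adj v w → 0 < δ v w)
    (hOanti : ∀ v w, G.Adj v w → O v w = -O w v) (hσ : 0 ≤ σ)
    (hnc : NonnegCycles G δ O σ) :
    ∀ (n : ℕ) (v : V) (c : G.Walk v v), c.length ≤ n → 0 ≤ walkWt δ O σ c := by
  intro n
  induction n with
  | zero =>
    intro v c hc
    cases c with
    | nil => simp [walkWt_nil]
    | cons h p => simp at hc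
  | succ n ih =>
    intro v c hlen
    cases c with
    | nil => simp [walkWt_nil]
    | cons h p =>
      rename_i a
      by_cases hnd : p.support.Nodup
      · have hp : p.IsPath := (Walk.isPath_def p).mpr hnd
        by_cases he : s(v, a) ∈ p.edges
        · rw [walkWt_cons, path_loop_aux h.ne hp he]
          have h1 := hδpos v a h
          have h2 := hδpos a v h.symm
          have h3 := hOanti v a h
          unfold edgeWt
          nlinarith
        · exact hnc _ _ ((Walk.cons_isCycle_iff p h).mpr ⟨hp, he⟩)
      · obtain ⟨x, hx2⟩ : ∃ x, 2 ≤ p.support.count x := by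
          by_contra hcon
          push_neg at hcon
          exact hnd (List.nodup_iff_count_le_one.mpr fun x => by have := hcon x; omega)
        have hxmem : x ∈ p.support := by
          rw [← List.count_pos_iff]; omega
        have hspec := p.take_spec hxmem
        have hq1 : (p.takeUntil x hxmem).support.count x = 1 :=
          p.count_support_takeUntil_eq_one hxmem
        have hxr : x ∈ (p.dropUntil x hxmem).support.tail := by
          have hsup : p.support =
              (p.takeUntil x hxmem).support ++ (p.dropUntil x hxmem).support.tail := by
            conv_lhs => rw [← hspec]
            exact Walk.support_append _ _
          rw [← List.count_pos_iff]
          rw [hsup, List.count_append, hq1] at hx2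
          omega
        have hlsplit : (p.takeUntil x hxmem).length + (p.dropUntil x hxmem).length
            = p.length := by
          conv_rhs => rw [← hspec]
          exact (Walk.length_append _ _).symm
        generalize hrdef : p.dropUntil x hxmem = r at hxr hspec hlsplit
        generalize hqdef : p.takeUntil x hxmem = q at hspec hlsplit
        cases r with
        | nil => simp at hxr
        | cons h2 r2 =>
          rename_i y
          have hxr2 : x ∈ r2.support := by simpa using hxr
          have hspec2 := r2.take_spec hxr2
          have hlsplit2 : (r2.takeUntil x hxr2).length + (r2.dropUntil x hxr2).length
              = r2.length := by
            conv_rhs => rw [← hspec2]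
            exact (Walk.length_append _ _).symm
          rw [Walk.length_cons] at hlsplit
          have hlen1 : (Walk.cons h2 (r2.takeUntil x hxr2)).length ≤ n := by
            rw [Walk.length_cons] at hlen ⊢
            omega
          have hlen2 : (Walk.cons h (q.append (r2.dropUntil x hxr2))).length ≤ n := by
            rw [Walk.length_cons] at hlen ⊢
            rw [Walk.length_append]
            omega
          have ih1 := ih x _ hlen1
          have ih2 := ih v _ hlen2
          have hw : walkWt δ O σ (Walk.cons h p) =
              walkWt δ O σ (Walk.cons h2 (r2.takeUntil x hxr2)) +
              walkWt δ O σ (Walk.cons h (q.append (r2.dropUntil x hxr2))) := by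
            conv_lhs => rw [← hspec]
            conv_lhs => rw [← hspec2]
            simp only [walkWt_cons, walkWt_append]
            ring
          linarith

lemma exists_path_le [DecidableEq V]
    (hcw : ∀ (v : V) (c : G.Walk v v), 0 ≤ walkWt δ O σ c) {u w : V} (p : G.Walk u w) :
    ∃ q : G.Walk u w, q.IsPath ∧ walkWt δ O σ q ≤ walkWt δ O σ p := by
  induction p with
  | nil => exact ⟨Walk.nil, Walk.IsPath.nil, le_refl _⟩
  | @cons a b c h p ih =>
    obtain ⟨q, hq, hle⟩ := ih
    by_cases hu : a ∈ q.support
    · have hsplit := q.take_spec hu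
      have hwt : walkWt δ O σ (q.takeUntil a hu) + walkWt δ O σ (q.dropUntil a hu)
          = walkWt δ O σ q := by
        rw [← walkWt_append, hsplit]
      have hc : 0 ≤ walkWt δ O σ (Walk.cons h (q.takeUntil a hu)) := hcw a _
      rw [walkWt_cons] at hc
      exact ⟨q.dropUntil a hu, hq.dropUntil hu, by rw [walkWt_cons]; linarith⟩
    · exact ⟨Walk.cons h q, hq.cons hu, by rw [walkWt_cons, walkWt_cons]; linarith⟩

lemma dS_isLeast [Fintype V] [DecidableEq V] (hconn : G.Connected)
    (hcw : ∀ (v : V) (c : G.Walk v v), 0 ≤ walkWt δ O σ c) (u w : V) :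
    (∃ p : G.Walk u w, walkWt δ O σ p = dS G δ O σ u w) ∧
      ∀ q : G.Walk u w, dS G δ O σ u w ≤ walkWt δ O σ q := by
  classical
  obtain ⟨p0⟩ := hconn.preconnected u w
  obtain ⟨q0, hq0, -⟩ := exists_path_le hcw p0
  set F := G.finsetWalkLengthLT (Fintype.card V) u w with hF
  have hq0F : q0 ∈ F := SimpleGraph.mem_finsetWalkLengthLT_iff.mpr hq0.length_lt
  have hFne : (F.image (walkWt δ O σ)).Nonempty := ⟨_, Finset.mem_image_of_mem _ hq0F⟩
  set m := (F.image (walkWt δ O σ)).min' hFne with hm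
  obtain ⟨pm, _, hpm⟩ := Finset.mem_image.mp ((F.image (walkWt δ O σ)).min'_mem hFne)
  have hlb : ∀ q : G.Walk u w, m ≤ walkWt δ O σ q := by
    intro q
    obtain ⟨q', hq', hle⟩ := exists_path_le hcw q
    refine le_trans (Finset.min'_le _ _ ?_) hle
    exact Finset.mem_image_of_mem _ (SimpleGraph.mem_finsetWalkLengthLT_iff.mpr hq'.length_lt)
  have hds : dS G δ O σ u w = m := by
    apply IsLeast.csInf_eq
    exact ⟨⟨pm, hpm⟩, by rintro x ⟨q, rfl⟩; exact hlb q⟩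
  exact ⟨⟨pm, by rw [hds, hpm]⟩, fun q => by rw [hds]; exact hlb q⟩

lemma dS_triangle [Fintype V] [DecidableEq V] (hconn : G.Connected)
    (hcw : ∀ (v : V) (c : G.Walk v v), 0 ≤ walkWt δ O σ c) {u x : V} (w : V)
    (h : G.Adj u x) :
    dS G δ O σ u w ≤ edgeWt δ O σ u x + dS G δ O σ x w := by
  obtain ⟨⟨p, hp⟩, -⟩ := dS_isLeast hconn hcw x w
  have := (dS_isLeast hconn hcw u w).2 (Walk.cons h p)
  rw [walkWt_cons, hp] at this
  exact this

lemma dS_self_nonneg [Fintype V] [DecidableEq V] (hconn : G.Connected)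
    (hcw : ∀ (v : V) (c : G.Walk v v), 0 ≤ walkWt δ O σ c) (w : V) :
    0 ≤ dS G δ O σ w w := by
  obtain ⟨⟨p, hp⟩, -⟩ := dS_isLeast hconn hcw w w
  rw [← hp]
  exact hcw w p

section PsiLemmas

variable [Fintype V] [DecidableEq V] [Nonempty V] (hconn : G.Connected)
  (hcw : ∀ (v : V) (c : G.Walk v v), 0 ≤ walkWt δ O σ c)
  (L : V → ℝ → ℝ) (v : V) (t : ℝ)

include hconn hcw

lemma psi_bddAbove :
    BddAbove {x : ℝ | ∃ w : V, ∃ p : G.Walk v w, x = L w t - L v t - walkWt δ O σ p} := by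
  refine ⟨Finset.univ.sup' Finset.univ_nonempty
    (fun w => L w t - L v t - dS G δ O σ v w), ?_⟩
  rintro x ⟨w, p, rfl⟩
  have h1 := (dS_isLeast hconn hcw v w).2 p
  refine le_trans ?_ (Finset.le_sup' _ (Finset.mem_univ w))
  linarith

lemma sub_dS_le_psi (w : V) :
    L w t - L v t - dS G δ O σ v w ≤ Psi G δ O σ L v t := by
  obtain ⟨⟨p, hp⟩, -⟩ := dS_isLeast hconn hcw v w
  exact le_csSup (psi_bddAbove hconn hcw L v t) ⟨w, p, by rw [hp]⟩

lemma psi_nonneg : 0 ≤ Psi G δ O σ L v t :=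
  le_csSup (psi_bddAbove hconn hcw L v t) ⟨v, Walk.nil, by simp [walkWt_nil]⟩

lemma psi_le_psiAll : Psi G δ O σ L v t ≤ PsiAll G δ O σ L t :=
  le_ciSup (f := fun u => Psi G δ O σ L u t)
    (Set.Finite.bddAbove (Set.finite_range _)) v

lemma psiAll_nonneg : 0 ≤ PsiAll G δ O σ L t :=
  le_trans (psi_nonneg hconn hcw L (Classical.arbitrary V) t)
    (psi_le_psiAll hconn hcw L (Classical.arbitrary V) t)

lemma psi_mono_level (hδpos : ∀ v w, G.Adj v w → 0 < δ v w) (hσ : σ ≤ σ') :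
    Psi G δ O σ' L v t ≤ Psi G δ O σ L v t := by
  refine csSup_le ⟨0, v, Walk.nil, by simp [walkWt_nil]⟩ ?_
  rintro x ⟨w, p, rfl⟩
  have h1 := walkWt_mono (O := O) hδpos hσ p
  have h2 : L w t - L v t - walkWt δ O σ p ≤ Psi G δ O σ L v t :=
    le_csSup (psi_bddAbove hconn hcw L v t) ⟨w, p, rfl⟩
  linarith

end PsiLemmas

lemma clock_lower {f : ℝ → ℝ} (hdf : Differentiable ℝ f) (hlo : ∀ x, 1 ≤ deriv f x)
    {t τ : ℝ} (h : t ≤ τ) : f t + (τ - t) ≤ f τ := by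
  have hmono : Monotone (fun x => f x - x) := by
    apply monotone_of_deriv_nonneg (hdf.sub differentiable_fun_id)
    intro x
    rw [deriv_sub (hdf x) differentiableAt_fun_id]
    have := hlo x
    simp only [deriv_id'']
    linarith
  have := hmono h
  simp only at this
  linarith

lemma fast_at [Fintype V] [DecidableEq V] (hconn : G.Connected)
    (hδpos : ∀ v w, G.Adj v w → 0 < δ v w)
    (hδsym : ∀ v w, G.Adj v w → δ v w = δ w v)
    (hOanti : ∀ v w, G.Adj v w → O v w = -O w v)
    (hcw : ∀ (v : V) (c : G.Walk v v), 0 ≤ walkWt δ O σ c)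
    (L : V → ℝ → ℝ) (hdiff : ∀ v, Differentiable ℝ (L v))
    (hlo : ∀ (v : V) (x : ℝ), 1 ≤ deriv (L v) x)
    {s : ℕ} (hs1 : 1 ≤ s) (hσs : σ = (s : ℝ) - 1/2)
    {w u : V} {t τ : ℝ} (htτ : t ≤ τ)
    (hmax : ∀ x : V, L u τ + dS G δ O σ u w ≤ L x τ + dS G δ O σ x w)
    (hpos : L u τ + dS G δ O σ u w < L w t + (τ - t)) :
    FastCondAt G δ O L u τ (s - 1) := by
  have hcast : ((s - 1 : ℕ) : ℝ) = (s : ℝ) - 1 := by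
    push_cast [Nat.cast_sub hs1]
    ring
  have hne : u ≠ w := by
    rintro rfl
    have h1 : L u t + (τ - t) ≤ L u τ := clock_lower (hdiff u) (hlo u) htτ
    have h2 : 0 ≤ dS G δ O σ u u := dS_self_nonneg hconn hcw u
    linarith
  obtain ⟨⟨pm, hpm⟩, -⟩ := dS_isLeast hconn hcw u w
  constructor
  · -- exists part
    cases pm with
    | nil => exact absurd rfl hne
    | cons h p2 =>
      rename_i x
      refine ⟨x, h, ?_⟩
      have hxw := (dS_isLeast hconn hcw x w).2 p2
      rw [walkWt_cons] at hpm
      have hx := hmax x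
      have : L u τ - L x τ ≤ -(edgeWt δ O σ u x) := by linarith
      rw [hcast]
      unfold edgeWt at this
      rw [hσs] at this
      nlinarith [this]
  · intro y hy
    have htr : dS G δ O σ y w ≤ edgeWt δ O σ y u + dS G δ O σ u w :=
      dS_triangle hconn hcw w hy.symm
    have hx := hmax y
    have hes : δ y u = δ u y := (hδsym u y hy).symm
    have hOs : O y u = -O u y := by
      have := hOanti u y hy
      linarith
    have : L u τ - L y τ ≤ edgeWt δ O σ y u := by linarith
    rw [hcast]
    unfold edgeWt at this
    rw [hσs, hes, hOs] at this
    nlinarith [this]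

lemma barrier {ι : Type*} [Fintype ι] [Nonempty ι] (h : ι → ℝ → ℝ)
    (hdiffh : ∀ u, Differentiable ℝ (h u)) {μ k : ℝ} (hkμ : k < μ)
    {a b c0 : ℝ}
    (hinit : ∀ u, h u a ≤ c0)
    (hBpos : ∀ x ∈ Set.Ico a b, 0 < c0 - k * (x - a))
    (hfast : ∀ x ∈ Set.Ico a b, ∀ u, 0 < h u x → (∀ y, h y x ≤ h u x) →
      deriv (h u) x ≤ -μ) :
    ∀ x ∈ Set.Icc a b, ∀ u, h u x ≤ c0 - k * (x - a) := by
  classical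
  set f : ℝ → ℝ := fun x => Finset.univ.sup' Finset.univ_nonempty (fun u => h u x) with hf
  have hfc : ∀ u x, h u x ≤ f x := fun u x =>
    Finset.le_sup' (fun u => h u x) (Finset.mem_univ u)
  have hfex : ∀ x, ∃ u, f x = h u x := by
    intro x
    obtain ⟨u, -, hu⟩ := Finset.exists_mem_eq_sup' Finset.univ_nonempty (fun u => h u x)
    exact ⟨u, hu⟩
  have hfcont : Continuous f := by
    rw [continuous_iff_continuousAt]
    intro x
    exact ContinuousAt.finset_sup'_apply Finset.univ_nonempty
      (fun i _ => ((hdiffh i).continuous).continuousAt)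
  have hactne : ∀ x : ℝ, (Finset.univ.filter (fun u => h u x = f x)).Nonempty := by
    intro x
    obtain ⟨u, hu⟩ := hfex x
    exact ⟨u, Finset.mem_filter.mpr ⟨Finset.mem_univ u, hu.symm⟩⟩
  set f' : ℝ → ℝ := fun x =>
    (Finset.univ.filter (fun u => h u x = f x)).sup' (hactne x)
      (fun u => deriv (h u) x) with hf'
  have key : ∀ x ∈ Set.Icc a b, f x ≤ c0 - k * (x - a) := by
    apply image_le_of_liminf_slope_right_lt_deriv_boundary
      (f := f) (f' := f') (B := fun x => c0 - k * (x - a)) (B' := fun _ => -k)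
    · exact hfcont.continuousOn
    · -- slope condition
      intro x _ r hr
      apply Filter.Eventually.frequently
      have hall : ∀ᶠ z in nhdsWithin x (Set.Ioi x), ∀ u, h u z < f x + r * (z - x) := by
        rw [Filter.eventually_all]
        intro u
        by_cases hu : h u x = f x
        · have hd : HasDerivAt (h u) (deriv (h u) x) x := (hdiffh u x).hasDerivAt
          have hlt : deriv (h u) x < r :=
            lt_of_le_of_lt (Finset.le_sup' (f := fun u => deriv (h u) x)
              (Finset.mem_filter.mpr ⟨Finset.mem_univ u, hu⟩)) hr
          have h1 : ∀ᶠ z in nhdsWithin x {x}ᶜ, slope (h u) x z < r :=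
            (hasDerivAt_iff_tendsto_slope.mp hd).eventually_lt_const hlt
          have h2 : ∀ᶠ z in nhdsWithin x (Set.Ioi x), slope (h u) x z < r :=
            h1.filter_mono (nhdsWithin_mono x (fun z hz => ne_of_gt hz))
          filter_upwards [h2, self_mem_nhdsWithin] with z hz hzx
          have hzx' : 0 < z - x := sub_pos.mpr hzx
          rw [slope_def_field] at hz
          rw [div_lt_iff₀ hzx'] at hz
          have : h u z - h u x < r * (z - x) := by
            have hzz : (h u z - h u x) / (z - x) < r := by
              rw [div_lt_iff₀ hzx']; exact hz
            rw [div_lt_iff₀ hzx'] at hzz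
            linarith
          linarith [hu ▸ this]
        · have hlt : h u x < f x := lt_of_le_of_ne (hfc u x) hu
          have hcont : Filter.Tendsto (fun z => h u z - r * z) (nhds x)
              (nhds (h u x - r * x)) :=
            (((hdiffh u).continuous.continuousAt).sub
              (continuousAt_const.mul continuousAt_id)).tendsto
          have hev : ∀ᶠ z in nhds x, h u z - r * z < f x - r * x :=
            hcont.eventually_lt_const (by linarith)
          filter_upwards [hev.filter_mono nhdsWithin_le_nhds] with z hz
          linarith
      filter_upwards [hall, self_mem_nhdsWithin] with z hz hzx
      have hzx' : 0 < z - x := sub_pos.mpr hzx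
      obtain ⟨u, hu⟩ := hfex z
      rw [slope_def_field, div_lt_iff₀ hzx', hu]
      linarith [hz u]
    · obtain ⟨u, hu⟩ := hfex a
      rw [hu]
      simpa using hinit u
    · intro x
      have h1 : HasDerivAt (fun x => k * (x - a)) (k * 1) x :=
        ((hasDerivAt_id x).sub_const a).const_mul k
      simpa using h1.const_sub c0
    · intro x hx hcontact
      have hfx : 0 < f x := by rw [hcontact]; exact hBpos x hx
      have hsup : f' x ≤ -μ := by
        apply Finset.sup'_le
        intro u hu
        have hu' : h u x = f x := (Finset.mem_filter.mp hu).2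
        exact hfast x hx u (hu' ▸ hfx) (fun y => hu' ▸ hfc y x)
      linarith
  intro x hx u
  exact le_trans (hfc u x) (key x hx)

end GCSAux

/-- catch-up corollary: if `t' ≥ t + Ψ^{s-1/2}(t)/μ`, then
`L_v(t') - L_v(t) ≥ (t'-t) + Ψ_v^s(t)`. -/
theorem catchup_cor
    {V : Type*} [Fintype V] [DecidableEq V] [Nonempty V]
    (G : SimpleGraph V) (hconn : G.Connected)
    (δ O : V → V → ℝ)
    (hδpos : ∀ v w, G.Adj v w → 0 < δ v w)
    (hδsym : ∀ v w, G.Adj v w → δ v w = δ w v)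
    (hOanti : ∀ v w, G.Adj v w → O v w = -O w v)
    (L : V → ℝ → ℝ) (ϑ μ : ℝ) (hϑ : 1 < ϑ) (hμ : 0 < μ)
    (hdiff : ∀ v, Differentiable ℝ (L v))
    (hlo : ∀ (v : V) (t : ℝ), 1 ≤ deriv (L v) t)
    (hhi : ∀ (v : V) (t : ℝ), deriv (L v) t ≤ ϑ * (1 + μ))
    (hadm : GCS.Admissible G δ O L ϑ μ)
    (s : ℕ) (hs1 : 1 ≤ s) (hnc : GCS.NonnegCycles G δ O ((s : ℝ) - 1/2))
    (v : V) (t t' : ℝ) (htt' : t < t')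
    (hwait : t + GCS.PsiAll G δ O ((s : ℝ) - 1/2) L t / μ ≤ t') :
    (t' - t) + GCS.Psi G δ O (s : ℝ) L v t ≤ L v t' - L v t := by
  classical
  open GCS GCSAux in
  set σ : ℝ := (s : ℝ) - 1/2 with hσ
  have hs1' : (1 : ℝ) ≤ (s : ℝ) := by exact_mod_cast hs1
  have hσpos : 0 ≤ σ := by rw [hσ]; linarith
  have hσle : σ ≤ (s : ℝ) := by rw [hσ]; linarith
  have hcw : ∀ (u : V) (c : G.Walk u u), 0 ≤ GCS.walkWt δ O σ c := fun u c =>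
    GCSAux.closedWalk_nonneg_aux hδpos hOanti hσpos hnc c.length u c le_rfl
  set Ψ0 := GCS.PsiAll G δ O σ L t with hΨ0
  have hΨ0nn : 0 ≤ Ψ0 := GCSAux.psiAll_nonneg hconn hcw L t
  have key : ∀ w : V, L w t + (t' - t) - GCS.dS G δ O σ v w ≤ L v t' := by
    intro w
    set h : V → ℝ → ℝ :=
      fun u τ => L w t + (τ - t) - L u τ - GCS.dS G δ O σ u w with hh
    have hhdiff : ∀ u, Differentiable ℝ (h u) := by
      intro u
      apply Differentiable.sub_const
      exact (differentiable_const _|>.add (differentiable_fun_id.sub_const t)).sub (hdiff u)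
    have hderiv : ∀ u x, deriv (h u) x = 1 - deriv (L u) x := by
      intro u x
      have h1 : HasDerivAt (fun τ => L w t + (τ - t)) 1 x := by
        simpa using ((hasDerivAt_id x).sub_const t).const_add (L w t)
      have h2 : HasDerivAt (h u) (1 - deriv (L u) x) x :=
        (h1.sub ((hdiff u x).hasDerivAt)).sub_const (GCS.dS G δ O σ u w)
      exact h2.deriv
    have hivals : ∀ u, h u t ≤ Ψ0 := by
      intro u
      have h1 : L w t - L u t - GCS.dS G δ O σ u w ≤ GCS.Psi G δ O σ L u t :=
        GCSAux.sub_dS_le_psi hconn hcw L u t w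
      have h2 := GCSAux.psi_le_psiAll hconn hcw L u t
      simp only [hh]
      linarith
    have hfastd : ∀ (aa bb : ℝ), t ≤ aa →
        ∀ x ∈ Set.Ico aa bb, ∀ u, 0 < h u x → (∀ y, h y x ≤ h u x) →
          deriv (h u) x ≤ -μ := by
      intro aa bb haa x hx u hpos hmaxu
      have hxt : t ≤ x := le_trans haa hx.1
      have hmax' : ∀ y, L u x + GCS.dS G δ O σ u w ≤ L y x + GCS.dS G δ O σ y w := by
        intro y
        have := hmaxu y
        simp only [hh] at this
        linarith
      have hposu : L u x + GCS.dS G δ O σ u w < L w t + (x - t) := by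
        simp only [hh] at hpos
        linarith
      have hfc : GCS.FastCondAt G δ O L u x (s - 1) :=
        GCSAux.fast_at hconn hδpos hδsym hOanti hcw L hdiff hlo hs1 hσ hxt hmax' hposu
      have hderge := (hadm u x).2 ⟨s - 1, hfc⟩
      rw [hderiv]
      linarith
    set t₁ := t + Ψ0 / μ with ht₁
    have htt₁ : t ≤ t₁ := le_add_of_nonneg_right (div_nonneg hΨ0nn hμ.le)
    have ht₁t' : t₁ ≤ t' := hwait
    have hfinal : ∀ ε > (0:ℝ), h v t' ≤ 2 * ε := by
      intro ε hε
      set k := μ * Ψ0 / (Ψ0 + ε) with hk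
      have hΨε : 0 < Ψ0 + ε := by linarith
      have hkμ : k < μ := by
        rw [hk, div_lt_iff₀ hΨε]
        nlinarith
      have hk0 : 0 ≤ k := by positivity
      have hc1 : Ψ0 + ε - k * (Ψ0 / μ) = (2*Ψ0*ε + ε^2)/(Ψ0+ε) := by
        rw [hk]
        field_simp
        ring
      have hc1pos : 0 < Ψ0 + ε - k * (Ψ0 / μ) := by
        rw [hc1]
        positivity
      have hc1le : Ψ0 + ε - k * (Ψ0 / μ) ≤ 2 * ε := by
        rw [hc1, div_le_iff₀ hΨε]
        nlinarith
      have hstage1 := GCSAux.barrier h hhdiff hkμ (a := t) (b := t₁) (c0 := Ψ0 + ε)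
        (fun u => le_trans (hivals u) (by linarith))
        (by
          intro x hx
          have hxk : k * (x - t) ≤ k * (Ψ0 / μ) := by
            apply mul_le_mul_of_nonneg_left _ hk0
            have := hx.2
            rw [ht₁] at this
            linarith
          linarith)
        (hfastd t t₁ le_rfl)
      have hstart2 : ∀ u, h u t₁ ≤ Ψ0 + ε - k * (Ψ0 / μ) := by
        intro u
        have := hstage1 t₁ ⟨htt₁, le_rfl⟩ u
        rw [ht₁] at this ⊢
        simpa using this
      have hstage2 := GCSAux.barrier h hhdiff (k := 0) (a := t₁) (b := t')
        (c0 := Ψ0 + ε - k * (Ψ0 / μ)) hμ hstart2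
        (by intro x hx; simpa using hc1pos)
        (hfastd t₁ t' htt₁)
      have := hstage2 t' ⟨ht₁t', le_rfl⟩ v
      simp only [zero_mul, sub_zero] at this
      exact this.trans hc1le
    have hX : h v t' ≤ 0 := by
      have hgen : ∀ X : ℝ, (∀ ε > (0:ℝ), X ≤ 2 * ε) → X ≤ 0 := by
        intro X hXX
        by_contra hc
        push_neg at hc
        have := hXX (X / 4) (by linarith)
        linarith
      exact hgen _ hfinal
    simp only [hh] at hX
    linarith
  have hPsis : GCS.Psi G δ O (s : ℝ) L v t ≤ GCS.Psi G δ O σ L v t :=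
    GCSAux.psi_mono_level hconn hcw L v t hδpos hσle
  have hPsiσ : GCS.Psi G δ O σ L v t ≤ L v t' - L v t - (t' - t) := by
    refine csSup_le ⟨0, v, SimpleGraph.Walk.nil, by simp [GCSAux.walkWt_nil]⟩ ?_
    rintro x ⟨w, p, rfl⟩
    have h1 := (GCSAux.dS_isLeast hconn hcw v w).2 p
    have h2 := key w
    linarith
  linarith
end

section
/- Let s₀ ∈ ℕ and assume every directed cycle has nonnegative ω^{s₀+1/2}-weight. Then for every integer s > s₀, 2·𝒲_δ ≤ 𝒲^s, where 𝒲_δ := max_{v,w∈V} d^δ(v,w) is the diameter of G with (undirected) edge lengths δ_{v,w}, and 𝒲^s := max_{v,w∈V} d^s(v,w). -/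
open SimpleGraph

namespace GCSX

open GCS

variable {V : Type*} {G : SimpleGraph V}

def dlen (δ : V → V → ℝ) {v w : V} (p : G.Walk v w) : ℝ :=
  (p.darts.map fun d => δ d.toProd.1 d.toProd.2).sum

@[simp] lemma walkWt_nil (δ O : V → V → ℝ) (s : ℝ) (v : V) :
    GCS.walkWt δ O s (SimpleGraph.Walk.nil : G.Walk v v) = 0 := rfl

@[simp] lemma walkWt_cons (δ O : V → V → ℝ) (s : ℝ) {u v w : V}
    (h : G.Adj u v) (p : G.Walk v w) :
    GCS.walkWt δ O s (SimpleGraph.Walk.cons h p) = GCS.edgeWt δ O s u v + GCS.walkWt δ O s p := by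
  simp [GCS.walkWt, SimpleGraph.Walk.darts_cons]

@[simp] lemma walkWt_append (δ O : V → V → ℝ) (s : ℝ) {u v w : V}
    (p : G.Walk u v) (q : G.Walk v w) :
    GCS.walkWt δ O s (p.append q) = GCS.walkWt δ O s p + GCS.walkWt δ O s q := by
  simp [GCS.walkWt, SimpleGraph.Walk.darts_append]

lemma closedWalk_nonneg [DecidableEq V]
    (δ O : V → V → ℝ) {r : ℝ} (hr : 0 ≤ r)
    (hδpos : ∀ v w, G.Adj v w → 0 < δ v w)
    (hδsym : ∀ v w, G.Adj v w → δ v w = δ w v)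
    (hOanti : ∀ v w, G.Adj v w → O v w = -O w v)
    (hnc : ∀ (v : V) (c : G.Walk v v), c.IsCycle → 0 ≤ GCS.walkWt δ O r c) :
    ∀ (n : ℕ) (v : V) (c : G.Walk v v), c.length = n → 0 ≤ GCS.walkWt δ O r c := by
  intro n
  induction n using Nat.strong_induction_on with
  | _ n ih =>
    intro v c hlen
    cases c with
    | nil => simp
    | @cons _ w _ h p =>
      by_cases hnd : (SimpleGraph.Walk.cons h p).support.tail.Nodup
      · -- no repetitions in the tail: c is nil-ish, a doubled edge, or a cycle
        cases p with
        | nil => exact absurd rfl h.ne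
        | @cons _ x _ h' p' =>
          cases p' with
          | nil =>
            -- c = v → w → v, weight 8 r δ v w
            have hδ := hδsym v w h
            have hO := hOanti v w h
            have hpos := hδpos v w h
            simp only [walkWt_cons, walkWt_nil, GCS.edgeWt]
            nlinarith
          | @cons _ y _ h'' p'' =>
            -- length ≥ 3 : it is a cycle
            have hpath : (SimpleGraph.Walk.cons h' (SimpleGraph.Walk.cons h'' p'')).IsPath := by
              rw [SimpleGraph.Walk.isPath_def]
              simpa [SimpleGraph.Walk.support_cons] using hnd
            have hedge : s(v, w) ∉ (SimpleGraph.Walk.cons h' (SimpleGraph.Walk.cons h'' p'')).edges := by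
              intro hmem
              rw [SimpleGraph.Walk.edges_cons, List.mem_cons] at hmem
              have hsupnd : (SimpleGraph.Walk.cons h' (SimpleGraph.Walk.cons h'' p'')).support.Nodup :=
                SimpleGraph.Walk.isPath_def _ |>.mp hpath
              rcases hmem with heq | hmem
              · -- s(v,w) = s(w,x) forces v = x
                rw [Sym2.eq_iff] at heq
                have hvx : v = x := by
                  rcases heq with ⟨hvw, _⟩ | ⟨hvx, _⟩
                  · exact absurd hvw h.ne
                  · exact hvx
                subst hvx
                -- then cons h'' p'' : Walk v v, its support has v twice
                have hv2 : v ∈ p''.support := by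
                  have := p''.end_mem_support
                  exact this
                simp only [SimpleGraph.Walk.support_cons, List.nodup_cons] at hsupnd
                exact hsupnd.2.1 (by simp [SimpleGraph.Walk.support_cons, hv2])
              · -- edge inside the rest: w appears twice
                have hw : w ∈ (SimpleGraph.Walk.cons h'' p'').support :=
                  SimpleGraph.Walk.snd_mem_support_of_mem_edges _ hmem
                simp only [SimpleGraph.Walk.support_cons, List.nodup_cons] at hsupnd
                exact hsupnd.1 hw
            have hcyc : (SimpleGraph.Walk.cons h (SimpleGraph.Walk.cons h' (SimpleGraph.Walk.cons h'' p''))).IsCycle :=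
              (SimpleGraph.Walk.cons_isCycle_iff _ h).mpr ⟨hpath, hedge⟩
            exact hnc v _ hcyc
      · -- a vertex repeats: split off a shorter closed walk
        obtain ⟨u, hdup⟩ := List.exists_duplicate_iff_not_nodup.mpr hnd
        have hcount : 2 ≤ ((SimpleGraph.Walk.cons h p).support.tail).count u :=
          List.duplicate_iff_two_le_count.mp hdup
        have htail : (SimpleGraph.Walk.cons h p).support.tail = p.support := by
          simp [SimpleGraph.Walk.support_cons]
        rw [htail] at hcount
        have hu : u ∈ p.support := List.count_pos_iff.mp (by omega)
        have hspec := p.take_spec hu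
        have hone : (p.takeUntil u hu).support.count u = 1 :=
          p.count_support_takeUntil_eq_one hu
        have hsplit : p.support = (p.takeUntil u hu).support ++ (p.dropUntil u hu).support.tail := by
          conv_lhs => rw [← hspec]
          rw [SimpleGraph.Walk.support_append]
        have hcount2 : 1 ≤ ((p.dropUntil u hu).support.tail).count u := by
          rw [hsplit, List.count_append, hone] at hcount
          omega
        have hu2 : u ∈ (p.dropUntil u hu).support.tail := List.count_pos_iff.mp (by omega)
        -- destructure the drop part
        generalize hq : p.dropUntil u hu = q at hu2 hspec
        cases q with
        | nil => simp at hu2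
        | @cons _ y _ h₂ q' =>
          have hu3 : u ∈ q'.support := by
            simpa [SimpleGraph.Walk.support_cons] using hu2
          have hspec2 := q'.take_spec hu3
          -- the two closed walks
          set A : G.Walk v v := (SimpleGraph.Walk.cons h (p.takeUntil u hu)).append (q'.dropUntil u hu3) with hA
          set B : G.Walk u u := SimpleGraph.Walk.cons h₂ (q'.takeUntil u hu3) with hB
          have hwt : GCS.walkWt δ O r (SimpleGraph.Walk.cons h p) = GCS.walkWt δ O r A + GCS.walkWt δ O r B := by
            rw [hA, hB]
            have e1 : GCS.walkWt δ O r p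
                = GCS.walkWt δ O r (p.takeUntil u hu) + GCS.walkWt δ O r (SimpleGraph.Walk.cons h₂ q') := by
              conv_lhs => rw [← hspec]
              rw [walkWt_append]
            have e2 : GCS.walkWt δ O r q'
                = GCS.walkWt δ O r (q'.takeUntil u hu3) + GCS.walkWt δ O r (q'.dropUntil u hu3) := by
              conv_lhs => rw [← hspec2]
              rw [walkWt_append]
            simp only [walkWt_cons, walkWt_append] at *
            rw [e1, e2]; ring
          have hlenp : p.length = (p.takeUntil u hu).length + (1 + q'.length) := by
            have := congrArg SimpleGraph.Walk.length hspec
            rw [SimpleGraph.Walk.length_append, SimpleGraph.Walk.length_cons] at this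
            omega
          have hlenq' : q'.length = (q'.takeUntil u hu3).length + (q'.dropUntil u hu3).length := by
            have := congrArg SimpleGraph.Walk.length hspec2
            rw [SimpleGraph.Walk.length_append] at this
            omega
          have hlenc : n = p.length + 1 := by
            rw [← hlen, SimpleGraph.Walk.length_cons]
          have hlA : A.length = 1 + (p.takeUntil u hu).length + (q'.dropUntil u hu3).length := by
            rw [hA, SimpleGraph.Walk.length_append, SimpleGraph.Walk.length_cons]
            omega
          have hlB : B.length = 1 + (q'.takeUntil u hu3).length := by
            rw [hB, SimpleGraph.Walk.length_cons]; omega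
          have hga : 0 ≤ GCS.walkWt δ O r A := ih A.length (by omega) v A rfl
          have hgb : 0 ≤ GCS.walkWt δ O r B := ih B.length (by omega) u B rfl
          rw [hwt]
          linarith


lemma walkWt_split (δ O : V → V → ℝ) (s r : ℝ) {v w : V} (p : G.Walk v w) :
    GCS.walkWt δ O s p = GCS.walkWt δ O r p + 4 * (s - r) * dlen δ p := by
  induction p with
  | nil => simp [dlen]
  | cons h q ih =>
      simp only [walkWt_cons, ih, dlen, SimpleGraph.Walk.darts_cons, List.map_cons,
        List.sum_cons, GCS.edgeWt]
      ring

lemma dlen_nonneg (δ : V → V → ℝ) (hδpos : ∀ v w, G.Adj v w → 0 < δ v w)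
    {v w : V} (p : G.Walk v w) : 0 ≤ dlen δ p := by
  apply List.sum_nonneg
  intro x hx
  simp only [List.mem_map] at hx
  obtain ⟨d, _, rfl⟩ := hx
  exact (hδpos _ _ d.adj).le

lemma dlen_reverse (δ : V → V → ℝ) (hδsym : ∀ v w, G.Adj v w → δ v w = δ w v)
    {v w : V} (p : G.Walk v w) : dlen δ p.reverse = dlen δ p := by
  unfold dlen
  rw [SimpleGraph.Walk.darts_reverse, List.map_reverse, List.sum_reverse, List.map_map]
  congr 1
  apply List.map_congr_left
  intro d _
  simpa using (hδsym _ _ d.adj).symm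

end GCSX

/-- `2𝒲_δ ≤ 𝒲^s` for every integer `s > s₀`, where `𝒲_δ` is the
diameter of `G` with edge lengths `δ` and `𝒲^s = max_{v,w} d^s(v,w)`. -/
theorem Wdelta_le_Ws
    {V : Type*} [Fintype V] [DecidableEq V] [Nonempty V]
    (G : SimpleGraph V) (hconn : G.Connected)
    (δ O : V → V → ℝ)
    (hδpos : ∀ v w, G.Adj v w → 0 < δ v w)
    (hδsym : ∀ v w, G.Adj v w → δ v w = δ w v)
    (hOanti : ∀ v w, G.Adj v w → O v w = -O w v)
    (s₀ : ℕ) (hnc : GCS.NonnegCycles G δ O ((s₀ : ℝ) + 1/2))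
    (s : ℕ) (hs : s₀ < s) :
    2 * (⨆ v : V, ⨆ w : V,
          sInf {x : ℝ | ∃ p : G.Walk v w,
            (p.darts.map fun d => δ d.toProd.1 d.toProd.2).sum = x}) ≤
      ⨆ v : V, ⨆ w : V, GCS.dS G δ O (s : ℝ) v w := by

  classical
  set r : ℝ := (s₀ : ℝ) + 1/2 with hrdef
  have hr : 0 ≤ r := by positivity
  have hclosed : ∀ (v : V) (c : G.Walk v v), 0 ≤ GCS.walkWt δ O r c := fun v c =>
    GCSX.closedWalk_nonneg δ O hr hδpos hδsym hOanti hnc c.length v c rfl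
  -- δ-distance
  set dδ : V → V → ℝ := fun v w =>
    sInf {x : ℝ | ∃ p : G.Walk v w,
      (p.darts.map fun d => δ d.toProd.1 d.toProd.2).sum = x} with hdδ
  have hset : ∀ v w : V, {x : ℝ | ∃ p : G.Walk v w,
      (p.darts.map fun d => δ d.toProd.1 d.toProd.2).sum = x}
      = {x : ℝ | ∃ p : G.Walk v w, GCSX.dlen δ p = x} := fun v w => rfl
  have hne : ∀ v w : V, ∃ p : G.Walk v w, True := fun v w =>
    (hconn.preconnected v w).elim fun p => ⟨p, trivial⟩
  have hbdd : ∀ v w : V, BddBelow {x : ℝ | ∃ p : G.Walk v w, GCSX.dlen δ p = x} := by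
    intro v w
    refine ⟨0, fun x hx => ?_⟩
    obtain ⟨p, rfl⟩ := hx
    exact GCSX.dlen_nonneg δ hδpos p
  have hdδ_le : ∀ (v w : V) (p : G.Walk v w), dδ v w ≤ GCSX.dlen δ p := by
    intro v w p
    exact csInf_le (hbdd v w) ⟨p, rfl⟩
  have hdδ_nonneg : ∀ v w : V, 0 ≤ dδ v w := by
    intro v w
    apply Real.sInf_nonneg
    rintro x ⟨p, rfl⟩
    exact GCSX.dlen_nonneg δ hδpos p
  have hc2 : (2 : ℝ) ≤ 4 * ((s : ℝ) - r) := by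
    have : (s₀ : ℝ) + 1 ≤ (s : ℝ) := by exact_mod_cast hs
    rw [hrdef]; linarith
  -- key inequality per pair of walks
  have key : ∀ (v w : V) (p : G.Walk v w) (q : G.Walk w v),
      4 * dδ v w ≤ GCS.walkWt δ O (s : ℝ) p + GCS.walkWt δ O (s : ℝ) q := by
    intro v w p q
    have h1 := GCSX.walkWt_split (G := G) δ O (s : ℝ) r p
    have h2 := GCSX.walkWt_split (G := G) δ O (s : ℝ) r q
    have h3 : 0 ≤ GCS.walkWt δ O r p + GCS.walkWt δ O r q := by
      have := hclosed v (p.append q)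
      rwa [GCSX.walkWt_append] at this
    have h4 : dδ v w ≤ GCSX.dlen δ p := hdδ_le v w p
    have h5 : dδ v w ≤ GCSX.dlen δ q := by
      have := hdδ_le v w q.reverse
      rwa [GCSX.dlen_reverse δ hδsym] at this
    have h6 := hdδ_nonneg v w
    nlinarith [GCSX.dlen_nonneg δ hδpos p, GCSX.dlen_nonneg δ hδpos q]
  have hSne : ∀ v w : V, {x : ℝ | ∃ p : G.Walk v w, GCS.walkWt δ O (s : ℝ) p = x}.Nonempty := by
    intro v w
    obtain ⟨p, -⟩ := hne v w
    exact ⟨_, p, rfl⟩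
  -- key inequality for dS
  have keyS : ∀ v w : V, 4 * dδ v w ≤ GCS.dS G δ O (s : ℝ) v w + GCS.dS G δ O (s : ℝ) w v := by
    intro v w
    rw [GCS.dS]
    have : 4 * dδ v w - GCS.dS G δ O (s : ℝ) w v ≤
        sInf {x : ℝ | ∃ p : G.Walk v w, GCS.walkWt δ O (s : ℝ) p = x} := by
      apply le_csInf (hSne v w)
      rintro x ⟨p, rfl⟩
      have : 4 * dδ v w - GCS.walkWt δ O (s : ℝ) p ≤ GCS.dS G δ O (s : ℝ) w v := by
        rw [GCS.dS]
        apply le_csInf (hSne w v)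
        rintro y ⟨q, rfl⟩
        have := key v w p q
        linarith
      linarith
    linarith
  -- bounded-above suprema (finite type)
  have hba : ∀ f : V → ℝ, BddAbove (Set.range f) := fun f => (Set.finite_range f).bddAbove
  set Ws : ℝ := ⨆ v : V, ⨆ w : V, GCS.dS G δ O (s : ℝ) v w with hWs
  have hWsle : ∀ v w : V, GCS.dS G δ O (s : ℝ) v w ≤ Ws := by
    intro v w
    calc GCS.dS G δ O (s : ℝ) v w ≤ ⨆ w : V, GCS.dS G δ O (s : ℝ) v w :=
          le_ciSup (hba _) w
      _ ≤ Ws := le_ciSup (hba fun v : V => ⨆ w : V, GCS.dS G δ O (s : ℝ) v w) v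
  have hfinal : (⨆ v : V, ⨆ w : V, dδ v w) ≤ Ws / 2 := by
    apply ciSup_le
    intro v
    apply ciSup_le
    intro w
    have h1 := keyS v w
    have h2 := hWsle v w
    have h3 := hWsle w v
    linarith
  linarith
end

section
/- Fix a time t, and suppose that for every ordered pair (v,w) of adjacent nodes the estimate o_{v,w}(t) has error e_{v,w}(t) := L_v(t) − L_w(t) − o_{v,w}(t) satisfying |e_{v,w}(t) − O_{v,w}| < δ_{v,w}. For s ∈ (1/2)·ℕ define Ψ̃^{s+1/4}(t) := sup over all pairs v,w ∈ V and all walks v₀,…,v_ℓ from v to w (including empty walks) of Σ_{i=1}^ℓ (o_{v_{i−1},v_i}(t) − (4s+1)·δ_{v_{i−1},v_i}). Then Ψ^{s+1/2}(t) ≤ Ψ̃^{s+1/4}(t) ≤ Ψ^s(t). -/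
open SimpleGraph

section Aux
open SimpleGraph
variable {V : Type*} {G : SimpleGraph V}

noncomputable def estSum (δ o : V → V → ℝ) (s : ℝ) {v w : V} (p : G.Walk v w) : ℝ :=
  (p.darts.map fun d =>
      o d.toProd.1 d.toProd.2 - (4 * s + 1) * δ d.toProd.1 d.toProd.2).sum

lemma estSum_nil (δ o : V → V → ℝ) (s : ℝ) (v : V) :
    estSum δ o s (SimpleGraph.Walk.nil : G.Walk v v) = 0 := rfl

lemma walkWt_nil_s16 (δ O : V → V → ℝ) (s : ℝ) (v : V) :
    GCS.walkWt δ O s (SimpleGraph.Walk.nil : G.Walk v v) = 0 := rfl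

lemma lower_aux (δ O : V → V → ℝ)
    (hδsym : ∀ v w, G.Adj v w → δ v w = δ w v)
    (hOanti : ∀ v w, G.Adj v w → O v w = -O w v)
    (L : V → ℝ → ℝ) (o : V → V → ℝ) (t : ℝ)
    (herr : ∀ v w, G.Adj v w → |(L v t - L w t - o v w) - O v w| < δ v w)
    (s : ℝ) {v w : V} (p : G.Walk v w) :
    L w t - L v t - GCS.walkWt δ O (s + 1/2) p ≤ estSum δ o s p.reverse := by
  induction p with
  | nil => simp [estSum_nil, walkWt_nil_s16]
  | cons h q ih =>
    rename_i a b c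
    have hedge : L b t - L a t - GCS.edgeWt δ O (s + 1/2) a b
        ≤ o b a - (4 * s + 1) * δ b a := by
      have h1 := herr b a h.symm
      have h2 := hδsym a b h
      have h3 := hOanti a b h
      rw [abs_lt] at h1
      simp only [GCS.edgeWt, h2, h3]
      linarith [h1.1, h1.2]
    have : (SimpleGraph.Walk.cons h q).reverse
        = q.reverse.append (SimpleGraph.Walk.cons h SimpleGraph.Walk.nil).reverse := by
      simp [SimpleGraph.Walk.reverse_cons]
    rw [this]
    simp only [estSum, GCS.walkWt, SimpleGraph.Walk.darts_append, List.map_append,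
      List.sum_append, SimpleGraph.Walk.darts_cons] at *
    simp only [SimpleGraph.Walk.reverse_cons, SimpleGraph.Walk.reverse_nil,
      SimpleGraph.Walk.nil_append, SimpleGraph.Walk.darts_cons,
      SimpleGraph.Walk.darts_nil, List.map_cons, List.map_nil, List.sum_cons,
      List.sum_nil, List.map_append, List.sum_append] at *
    have := ih
    simp only [GCS.edgeWt] at *
    linarith [hedge, this]

lemma upper_aux (δ O : V → V → ℝ)
    (hδsym : ∀ v w, G.Adj v w → δ v w = δ w v)
    (hOanti : ∀ v w, G.Adj v w → O v w = -O w v)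
    (L : V → ℝ → ℝ) (o : V → V → ℝ) (t : ℝ)
    (herr : ∀ v w, G.Adj v w → |(L v t - L w t - o v w) - O v w| < δ v w)
    (s : ℝ) {v w : V} (p : G.Walk v w) :
    estSum δ o s p ≤ L v t - L w t - GCS.walkWt δ O s p.reverse := by
  induction p with
  | nil => simp [estSum_nil, walkWt_nil_s16]
  | cons h q ih =>
    rename_i a b c
    have hedge : o a b - (4 * s + 1) * δ a b
        ≤ L a t - L b t - GCS.edgeWt δ O s b a := by
      have h1 := herr a b h
      have h2 := hδsym a b h
      have h3 := hOanti a b h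
      rw [abs_lt] at h1
      simp only [GCS.edgeWt, h2, h3]
      linarith [h1.1, h1.2]
    have : (SimpleGraph.Walk.cons h q).reverse
        = q.reverse.append (SimpleGraph.Walk.cons h SimpleGraph.Walk.nil).reverse := by
      simp [SimpleGraph.Walk.reverse_cons]
    rw [this]
    simp only [estSum, GCS.walkWt, SimpleGraph.Walk.darts_append, List.map_append,
      List.sum_append, SimpleGraph.Walk.darts_cons] at *
    simp only [SimpleGraph.Walk.reverse_cons, SimpleGraph.Walk.reverse_nil,
      SimpleGraph.Walk.nil_append, SimpleGraph.Walk.darts_cons,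
      SimpleGraph.Walk.darts_nil, List.map_cons, List.map_nil, List.sum_cons,
      List.sum_nil] at *
    simp only [GCS.edgeWt] at *
    linarith [hedge, ih]

end Aux

/-- `Ψ^{s+1/2}(t) ≤ Ψ̃^{s+1/4}(t) ≤ Ψ^s(t)` for the estimate-based
potential `Ψ̃^{s+1/4}(t) = sup over walks of Σ (o_{v_{i-1},v_i}(t) - (4s+1)δ)`. -/
theorem estimate_potential_squeeze
    {V : Type*} [Fintype V] [DecidableEq V] [Nonempty V]
    (G : SimpleGraph V) (hconn : G.Connected)
    (δ O : V → V → ℝ)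
    (hδpos : ∀ v w, G.Adj v w → 0 < δ v w)
    (hδsym : ∀ v w, G.Adj v w → δ v w = δ w v)
    (hOanti : ∀ v w, G.Adj v w → O v w = -O w v)
    (L : V → ℝ → ℝ) (o : V → V → ℝ) (t : ℝ)
    (herr : ∀ v w, G.Adj v w → |(L v t - L w t - o v w) - O v w| < δ v w)
    (s : ℝ) (hs : ∃ n : ℕ, 2 * s = (n : ℝ)) :
    (⨆ v : V, GCS.PsiE G δ O (s + 1/2) L v t) ≤
      (⨆ v : V, ⨆ w : V, ⨆ p : G.Walk v w,
        (((p.darts.map fun d =>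
            o d.toProd.1 d.toProd.2 - (4 * s + 1) * δ d.toProd.1 d.toProd.2).sum : ℝ)
          : EReal)) ∧
    (⨆ v : V, ⨆ w : V, ⨆ p : G.Walk v w,
        (((p.darts.map fun d =>
            o d.toProd.1 d.toProd.2 - (4 * s + 1) * δ d.toProd.1 d.toProd.2).sum : ℝ)
          : EReal)) ≤
      ⨆ v : V, GCS.PsiE G δ O s L v t := by
  constructor
  · refine iSup_le fun v => ?_
    rw [GCS.PsiE]
    refine iSup_le fun w => iSup_le fun p => ?_
    refine le_trans (EReal.coe_le_coe_iff.mpr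
      (lower_aux δ O hδsym hOanti L o t herr s p)) ?_
    exact le_iSup_of_le w <| le_iSup_of_le v <| le_iSup_of_le p.reverse le_rfl
  · refine iSup_le fun v => iSup_le fun w => iSup_le fun p => ?_
    refine le_trans (EReal.coe_le_coe_iff.mpr
      (upper_aux δ O hδsym hOanti L o t herr s p)) ?_
    refine le_trans ?_ (le_iSup _ w)
    rw [GCS.PsiE]
    exact le_iSup_of_le v <| le_iSup_of_le p.reverse le_rfl
end
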